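/- arXiv:0711.3759 — 12 statements merged into one kernel-verified Lean document; each statement's English description precedes it below -/
import Mathlib

section
/- (Theorem 1.2(1).) Fix t_0 ∈ ℂ. The following three conditions are equivalent: (i) there exist u_1, …, u_{n-1} ∈ ℂ, all nonzero, such that rank M^{X,n}_2(t_0, u) ≤ 2n (i.e. some point of the fibre over t_0 lying off all the coordinate sub-spans lies in Φ_2(X)); (ii) rank M^i_2(t_0) = 2 for every i = 1, …, n (i.e. the parameter-t_0 point p_i is a flex of C_i for every i); (iii) for every s ∈ {1,…,n} and all scalars u_i ∈ ℂ (i ≠ s), rank M^{X,s}_2(t_0, u) ≤ 2n (i.e. the whole fibre over t_0 is contained in Φ_2(X)). -/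
open Matrix

/-- The `k`-th jet matrix `M^i_k(t)` of a parametrized curve. -/
noncomputable def curveJet (r : ℕ) (a : ℂ → Fin (r + 1) → ℂ) (k : ℕ) (t : ℂ) :
    Matrix (Fin (k + 1)) (Fin (r + 1)) ℂ :=
  Matrix.of fun l j => iteratedDeriv (l : ℕ) (fun s => a s j) t

/-- The `i`-th block inclusion `ι_i : ℂ^{r_i+1} → V`. -/
noncomputable def blockIncl {n : ℕ} (r : Fin n → ℕ) (i : Fin n)
    (v : Fin (r i + 1) → ℂ) : (Σ j : Fin n, Fin (r j + 1)) → ℂ :=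
  fun p => if h : p.1 = i then v (Fin.cast (by rw [h]) p.2) else 0

section Aux

variable {n : ℕ} (r : Fin n → ℕ)

/-- The `i`-th block projection. -/
noncomputable def blockProj (i : Fin n) :
    ((Σ j : Fin n, Fin (r j + 1)) → ℂ) →ₗ[ℂ] (Fin (r i + 1) → ℂ) where
  toFun x := fun j => x ⟨i, j⟩
  map_add' _ _ := rfl
  map_smul' _ _ := rfl

lemma blockIncl_add (i : Fin n) (v w : Fin (r i + 1) → ℂ) :
    blockIncl r i (v + w) = blockIncl r i v + blockIncl r i w := by
  funext p; simp only [blockIncl, Pi.add_apply]; split <;> simp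

lemma blockIncl_smul (i : Fin n) (c : ℂ) (v : Fin (r i + 1) → ℂ) :
    blockIncl r i (c • v) = c • blockIncl r i v := by
  funext p; simp only [blockIncl, Pi.smul_apply, smul_eq_mul]; split <;> simp

/-- `blockIncl` as a linear map. -/
noncomputable def blockInclL (i : Fin n) :
    (Fin (r i + 1) → ℂ) →ₗ[ℂ] ((Σ j : Fin n, Fin (r j + 1)) → ℂ) where
  toFun := blockIncl r i
  map_add' := blockIncl_add r i
  map_smul' := blockIncl_smul r i

lemma blockProj_blockIncl_self (i : Fin n) (v : Fin (r i + 1) → ℂ) :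
    blockProj r i (blockIncl r i v) = v := by
  funext j; simp [blockProj, blockIncl]

lemma blockProj_blockIncl_ne {i j : Fin n} (h : i ≠ j) (v : Fin (r i + 1) → ℂ) :
    blockProj r j (blockIncl r i v) = 0 := by
  funext c; simp [blockProj, blockIncl, Ne.symm h]

lemma sum_blockIncl_blockProj (x : (Σ j : Fin n, Fin (r j + 1)) → ℂ) :
    ∑ i, blockIncl r i (blockProj r i x) = x := by
  funext p
  obtain ⟨j, c⟩ := p
  rw [Finset.sum_apply]
  rw [Finset.sum_eq_single j]
  · simp [blockIncl, blockProj]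
  · intro i _ hij; simp [blockIncl, Ne.symm hij]
  · simp


/-- Membership in the block span is detected by the projections. -/
lemma mem_blockSpan_iff (w : ∀ i : Fin n, Fin 2 → (Fin (r i + 1) → ℂ))
    (x : (Σ j : Fin n, Fin (r j + 1)) → ℂ) :
    x ∈ Submodule.span ℂ
        (Set.range fun p : Fin n × Fin 2 => blockIncl r p.1 (w p.1 p.2)) ↔
      ∀ i, blockProj r i x ∈ Submodule.span ℂ (Set.range (w i)) := by
  constructor
  · intro hx j
    induction hx using Submodule.span_induction with
    | mem y hy =>
        obtain ⟨⟨i, m⟩, rfl⟩ := hy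
        by_cases h : i = j
        · subst h
          rw [blockProj_blockIncl_self]
          exact Submodule.subset_span ⟨m, rfl⟩
        · rw [blockProj_blockIncl_ne r h]
          exact Submodule.zero_mem _
    | zero => simp
    | add y z _ _ hy hz => rw [map_add]; exact Submodule.add_mem _ hy hz
    | smul c y _ hy => rw [_root_.map_smul]; exact Submodule.smul_mem _ _ hy
  · intro hx
    rw [← sum_blockIncl_blockProj r x]
    refine Submodule.sum_mem _ fun i _ => ?_
    obtain ⟨c, hc⟩ := (Submodule.mem_span_range_iff_exists_fun ℂ).1 (hx i)
    rw [← hc]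
    have : blockIncl r i (∑ m, c m • w i m) = ∑ m, c m • blockIncl r i (w i m) := by
      rw [show blockIncl r i = blockInclL r i from rfl, map_sum]
      simp [_root_.map_smul]
    rw [this]
    exact Submodule.sum_mem _ fun m _ =>
      Submodule.smul_mem _ _ (Submodule.subset_span ⟨(i, m), rfl⟩)

/-- The block family is linearly independent when each block pair is. -/
lemma blockFamily_indep (w : ∀ i : Fin n, Fin 2 → (Fin (r i + 1) → ℂ))
    (hw : ∀ i, LinearIndependent ℂ (w i)) :
    LinearIndependent ℂ (fun p : Fin n × Fin 2 => blockIncl r p.1 (w p.1 p.2)) := by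
  rw [Fintype.linearIndependent_iff]
  intro c hc p
  have h1 : blockProj r p.1
      (∑ q : Fin n × Fin 2, c q • blockIncl r q.1 (w q.1 q.2)) = 0 := by
    rw [hc]; simp
  rw [map_sum] at h1
  have h2 : ∀ q : Fin n × Fin 2, blockProj r p.1 (c q • blockIncl r q.1 (w q.1 q.2)) =
      c q • blockProj r p.1 (blockIncl r q.1 (w q.1 q.2)) := fun q => map_smul _ _ _
  simp only [h2] at h1
  rw [Fintype.sum_prod_type] at h1
  rw [Finset.sum_eq_single p.1] at h1
  · simp only [blockProj_blockIncl_self] at h1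
    exact (Fintype.linearIndependent_iff.1 (hw p.1)) (fun m => c (p.1, m)) h1 p.2
  · intro i _ hij
    simp [blockProj_blockIncl_ne r hij]
  · simp

/-- Key finrank computation for `W ⊔ span{x}`. -/
lemma finrank_sup_span_singleton_le_iff {V : Type*} [AddCommGroup V] [Module ℂ V]
    [FiniteDimensional ℂ V] (W : Submodule ℂ V) (x : V) (d : ℕ)
    (hW : Module.finrank ℂ W = d) :
    Module.finrank ℂ ↥(W ⊔ Submodule.span ℂ {x}) ≤ d ↔ x ∈ W := by
  constructor
  · intro h
    have hle : W ≤ W ⊔ Submodule.span ℂ {x} := le_sup_left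
    have h1 : Module.finrank ℂ W ≤ Module.finrank ℂ ↥(W ⊔ Submodule.span ℂ {x}) :=
      Submodule.finrank_mono hle
    have heq : Module.finrank ℂ W = Module.finrank ℂ ↥(W ⊔ Submodule.span ℂ {x}) := by
      omega
    have hEq := Submodule.eq_of_le_of_finrank_eq hle heq
    have hx : x ∈ W ⊔ Submodule.span ℂ {x} :=
      Submodule.mem_sup_right (Submodule.mem_span_singleton_self x)
    rwa [← hEq] at hx
  · intro hx
    have hle : Submodule.span ℂ {x} ≤ W :=
      (Submodule.span_singleton_le_iff_mem _ _).2 hx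
    rw [sup_eq_left.2 hle, hW]

end Aux

/-- The `k`-th jet matrix `M^{X,s}_k(t,u)` of the decomposable scroll. -/
noncomputable def scrollJet {n : ℕ} (r : Fin n → ℕ)
    (a : ∀ i : Fin n, ℂ → Fin (r i + 1) → ℂ) (k : ℕ) (s : Fin n) (t : ℂ)
    (u : Fin n → ℂ) :
    Matrix (Fin (k + 1) ⊕ ({i : Fin n // i ≠ s} × Fin k))
      (Σ j : Fin n, Fin (r j + 1)) ℂ :=
  Matrix.of fun row =>
    match row with
    | Sum.inl l =>
        blockIncl r s (curveJet (r s) (a s) k t l) +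
          ∑ i ∈ Finset.univ.filter (fun i => i ≠ s),
            u i • blockIncl r i (curveJet (r i) (a i) k t l)
    | Sum.inr q =>
        blockIncl r q.1.1 (curveJet (r q.1.1) (a q.1.1) k t q.2.castSucc)

/-- The row space of a matrix, i.e. the span of its rows. -/
noncomputable def rowSpace {m α : Type*} [Fintype m] (M : Matrix m α ℂ) : Submodule ℂ (α → ℂ) :=
  Submodule.span ℂ (Set.range fun i => M i)

/-- Flex characterization for a single curve. -/
lemma flex_iff {ri : ℕ} (a : ℂ → Fin (ri + 1) → ℂ) (t0 : ℂ)
    (hind : LinearIndependent ℂ (fun m : Fin 2 => curveJet ri a 1 t0 m)) :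
    (curveJet ri a 2 t0).rank = 2 ↔
      curveJet ri a 2 t0 2 ∈ Submodule.span ℂ (Set.range (curveJet ri a 1 t0)) := by
  set W := Submodule.span ℂ (Set.range (curveJet ri a 1 t0)) with hWdef
  have hW2 : Module.finrank ℂ W = 2 := by
    rw [hWdef]
    rw [show (Set.range (curveJet ri a 1 t0)) =
      (Set.range fun m : Fin 2 => curveJet ri a 1 t0 m) from rfl]
    rw [finrank_span_eq_card hind]
    simp
  have hspan : Submodule.span ℂ (Set.range (curveJet ri a 2 t0)) =
      W ⊔ Submodule.span ℂ {curveJet ri a 2 t0 2} := by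
    apply le_antisymm
    · rw [Submodule.span_le]
      rintro _ ⟨l, rfl⟩
      fin_cases l
      · exact Submodule.mem_sup_left (Submodule.subset_span ⟨0, rfl⟩)
      · exact Submodule.mem_sup_left (Submodule.subset_span ⟨1, rfl⟩)
      · exact Submodule.mem_sup_right (Submodule.mem_span_singleton_self _)
    · apply sup_le
      · rw [hWdef, Submodule.span_le]
        rintro _ ⟨m, rfl⟩
        fin_cases m
        · exact Submodule.subset_span ⟨0, rfl⟩
        · exact Submodule.subset_span ⟨1, rfl⟩
      · rw [Submodule.span_singleton_le_iff_mem]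
        exact Submodule.subset_span ⟨2, rfl⟩
  constructor
  · intro h
    rw [Matrix.rank_eq_finrank_span_row, show (curveJet ri a 2 t0).row = curveJet ri a 2 t0 from rfl, hspan] at h
    exact (finrank_sup_span_singleton_le_iff _ _ 2 hW2).1 h.le
  · intro h
    rw [Matrix.rank_eq_finrank_span_row, show (curveJet ri a 2 t0).row = curveJet ri a 2 t0 from rfl, hspan,
      sup_eq_left.2 ((Submodule.span_singleton_le_iff_mem _ _).2 h), hW2]

/-- Scroll rank characterization. -/
lemma scroll_iff {n : ℕ} (r : Fin n → ℕ) (a : ∀ i : Fin n, ℂ → Fin (r i + 1) → ℂ)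
    (t0 : ℂ) (s : Fin n) (u : Fin n → ℂ)
    (hind : ∀ i, LinearIndependent ℂ (fun m : Fin 2 => curveJet (r i) (a i) 1 t0 m)) :
    ((scrollJet r a 2 s t0 u).rank ≤ 2 * n ↔
      (curveJet (r s) (a s) 2 t0 2 ∈
          Submodule.span ℂ (Set.range (curveJet (r s) (a s) 1 t0)) ∧
        ∀ i, i ≠ s → u i • curveJet (r i) (a i) 2 t0 2 ∈
          Submodule.span ℂ (Set.range (curveJet (r i) (a i) 1 t0)))) := by
  classical
  set w : ∀ i : Fin n, Fin 2 → (Fin (r i + 1) → ℂ) :=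
    fun i m => curveJet (r i) (a i) 1 t0 m with hw
  set B := Submodule.span ℂ
    (Set.range fun p : Fin n × Fin 2 => blockIncl r p.1 (w p.1 p.2)) with hB
  set R2 := scrollJet r a 2 s t0 u (Sum.inl 2) with hR2def
  have hBrank : Module.finrank ℂ B = 2 * n := by
    rw [hB, finrank_span_eq_card (blockFamily_indep r w hind)]
    simp [mul_comm]
  have hrows : Submodule.span ℂ (Set.range (scrollJet r a 2 s t0 u)) =
      B ⊔ Submodule.span ℂ {R2} := by
    apply le_antisymm
    · rw [Submodule.span_le]
      rintro _ ⟨row, rfl⟩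
      rcases row with l | q
      · fin_cases l
        · refine Submodule.mem_sup_left (Submodule.add_mem _
            (Submodule.subset_span ⟨(s, 0), rfl⟩)
            (Submodule.sum_mem _ fun i hi =>
              Submodule.smul_mem _ _ (Submodule.subset_span ⟨(i, 0), rfl⟩)))
        · refine Submodule.mem_sup_left (Submodule.add_mem _
            (Submodule.subset_span ⟨(s, 1), rfl⟩)
            (Submodule.sum_mem _ fun i hi =>
              Submodule.smul_mem _ _ (Submodule.subset_span ⟨(i, 1), rfl⟩)))
        · exact Submodule.mem_sup_right (Submodule.mem_span_singleton_self _)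
      · obtain ⟨⟨i, hi⟩, m⟩ := q
        exact Submodule.mem_sup_left (Submodule.subset_span ⟨(i, m), rfl⟩)
    · apply sup_le
      · rw [hB, Submodule.span_le]
        rintro _ ⟨⟨i, m⟩, rfl⟩
        by_cases hi : i = s
        · subst hi
          have h1 : scrollJet r a 2 i t0 u (Sum.inl m.castSucc) ∈
              Submodule.span ℂ (Set.range (scrollJet r a 2 i t0 u)) :=
            Submodule.subset_span ⟨Sum.inl m.castSucc, rfl⟩
          have h2 : (∑ j ∈ Finset.univ.filter (fun j => j ≠ i),
              u j • blockIncl r j (curveJet (r j) (a j) 2 t0 m.castSucc)) ∈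
              Submodule.span ℂ (Set.range (scrollJet r a 2 i t0 u)) :=
            Submodule.sum_mem _ fun j hj =>
              Submodule.smul_mem _ _
                (Submodule.subset_span ⟨Sum.inr ⟨⟨j, (Finset.mem_filter.1 hj).2⟩, m⟩, rfl⟩)
          have h3 := Submodule.sub_mem _ h1 h2
          have he : blockIncl r i (w i m) =
              scrollJet r a 2 i t0 u (Sum.inl m.castSucc) -
                ∑ j ∈ Finset.univ.filter (fun j => j ≠ i),
                  u j • blockIncl r j (curveJet (r j) (a j) 2 t0 m.castSucc) := by
            have : scrollJet r a 2 i t0 u (Sum.inl m.castSucc) =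
                blockIncl r i (w i m) +
                  ∑ j ∈ Finset.univ.filter (fun j => j ≠ i),
                    u j • blockIncl r j (curveJet (r j) (a j) 2 t0 m.castSucc) := rfl
            rw [this, add_sub_cancel_right]
          show blockIncl r i (w i m) ∈ _
          rw [he]
          exact h3
        · exact Submodule.subset_span ⟨Sum.inr ⟨⟨i, hi⟩, m⟩, rfl⟩
      · rw [Submodule.span_singleton_le_iff_mem]
        exact Submodule.subset_span ⟨Sum.inl 2, rfl⟩
  have hps : blockProj r s R2 = curveJet (r s) (a s) 2 t0 2 := by
    rw [show R2 = blockIncl r s (curveJet (r s) (a s) 2 t0 2) +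
        ∑ i ∈ Finset.univ.filter (fun i => i ≠ s),
          u i • blockIncl r i (curveJet (r i) (a i) 2 t0 2) from rfl]
    rw [map_add, map_sum, blockProj_blockIncl_self]
    rw [Finset.sum_eq_zero fun i hi => by
      rw [_root_.map_smul, blockProj_blockIncl_ne r (Finset.mem_filter.1 hi).2, smul_zero]]
    rw [add_zero]
  have hpj : ∀ j, j ≠ s → blockProj r j R2 = u j • curveJet (r j) (a j) 2 t0 2 := by
    intro j hj
    rw [show R2 = blockIncl r s (curveJet (r s) (a s) 2 t0 2) +
        ∑ i ∈ Finset.univ.filter (fun i => i ≠ s),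
          u i • blockIncl r i (curveJet (r i) (a i) 2 t0 2) from rfl]
    rw [map_add, map_sum, blockProj_blockIncl_ne r (Ne.symm hj)]
    rw [Finset.sum_eq_single_of_mem j
      (Finset.mem_filter.2 ⟨Finset.mem_univ j, hj⟩)
      (fun i _ hij => by
        rw [_root_.map_smul, blockProj_blockIncl_ne r hij, smul_zero])]
    rw [_root_.map_smul, blockProj_blockIncl_self, zero_add]
  have hmem : R2 ∈ B ↔
      (curveJet (r s) (a s) 2 t0 2 ∈
          Submodule.span ℂ (Set.range (curveJet (r s) (a s) 1 t0)) ∧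
        ∀ i, i ≠ s → u i • curveJet (r i) (a i) 2 t0 2 ∈
          Submodule.span ℂ (Set.range (curveJet (r i) (a i) 1 t0))) := by
    rw [hB, mem_blockSpan_iff]
    constructor
    · intro h
      refine ⟨?_, fun i hi => ?_⟩
      · have := h s; rwa [hps] at this
      · have := h i; rwa [hpj i hi] at this
    · intro ⟨h1, h2⟩ i
      by_cases hi : i = s
      · subst hi; rwa [hps]
      · rw [hpj i hi]; exact h2 i hi
  rw [Matrix.rank_eq_finrank_span_row, show (scrollJet r a 2 s t0 u).row = scrollJet r a 2 s t0 u from rfl, hrows, ← hmem]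
  exact finrank_sup_span_singleton_le_iff _ _ (2 * n) hBrank

/-- Theorem 1.2(1): for a decomposable scroll and a fixed fibre
(over `t0`), TFAE: (i) some point of the fibre off all coordinate sub-spans is a
flex of `X`; (ii) every `p_i` is a flex of `C_i`; (iii) the whole fibre is
contained in `Φ₂(X)`. -/
theorem statement1 {n : ℕ} (hn : 2 ≤ n) (r : Fin n → ℕ) (hr : ∀ i, 1 ≤ r i)
    (a : ∀ i : Fin n, ℂ → Fin (r i + 1) → ℂ)
    (hent : ∀ i j, Differentiable ℂ fun t => a i t j)
    (hnd : ∀ i t, (curveJet (r i) (a i) 1 t).rank = 2)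
    (sn : Fin n) (hsn : (sn : ℕ) = n - 1) (t0 : ℂ) :
    ((∃ u : Fin n → ℂ, (∀ i, i ≠ sn → u i ≠ 0) ∧
        (scrollJet r a 2 sn t0 u).rank ≤ 2 * n) ↔
      (∀ i, (curveJet (r i) (a i) 2 t0).rank = 2)) ∧
    ((∀ i, (curveJet (r i) (a i) 2 t0).rank = 2) ↔
      (∀ (s : Fin n) (u : Fin n → ℂ), (scrollJet r a 2 s t0 u).rank ≤ 2 * n)) := by
  have hind : ∀ i, LinearIndependent ℂ (fun m : Fin 2 => curveJet (r i) (a i) 1 t0 m) := by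
    intro i
    rw [linearIndependent_iff_card_eq_finrank_span]
    have h := hnd i t0
    rw [Matrix.rank_eq_finrank_span_row] at h
    simp only [Set.finrank, Fintype.card_fin]
    exact h.symm
  constructor
  · constructor
    · rintro ⟨u, hu, hrank⟩ i
      obtain ⟨h1, h2⟩ := (scroll_iff r a t0 sn u hind).1 hrank
      rw [flex_iff (a i) t0 (hind i)]
      by_cases hi : i = sn
      · subst hi; exact h1
      · have h3 := h2 i hi
        rwa [Submodule.smul_mem_iff _ (hu i hi)] at h3
    · intro h
      refine ⟨fun _ => 1, fun i _ => one_ne_zero, ?_⟩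
      refine (scroll_iff r a t0 sn (fun _ => 1) hind).2
        ⟨(flex_iff (a sn) t0 (hind sn)).1 (h sn), fun i _ => ?_⟩
      rw [one_smul]
      exact (flex_iff (a i) t0 (hind i)).1 (h i)
  · constructor
    · intro h s u
      refine (scroll_iff r a t0 s u hind).2
        ⟨(flex_iff (a s) t0 (hind s)).1 (h s), fun i _ => ?_⟩
      exact Submodule.smul_mem _ _ ((flex_iff (a i) t0 (hind i)).1 (h i))
    · intro h i
      rw [flex_iff (a i) t0 (hind i)]
      exact ((scroll_iff r a t0 i (fun _ => 0) hind).1 (h i (fun _ => 0))).1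
end

section
/- (Theorem 1.2(2).) Fix t_0 ∈ ℂ and s ∈ {1,…,n}. Then rank M^{X,s}_2(t_0, 0) ≤ 2n if and only if rank M^s_2(t_0) = 2; that is, the point p_s of C_s at parameter t_0, regarded as a point of the scroll X, lies in Φ_2(X) if and only if p_s is a flex of C_s. -/
open Matrix

/-- The finrank of a product of submodules is the sum of the finranks. -/
lemma finrank_pi_submodule {ι : Type*} [Fintype ι] {φ : ι → Type*}
    [∀ i, AddCommGroup (φ i)] [∀ i, Module ℂ (φ i)] [∀ i, FiniteDimensional ℂ (φ i)]
    (p : ∀ i, Submodule ℂ (φ i)) :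
    Module.finrank ℂ (Submodule.pi Set.univ p) = ∑ i, Module.finrank ℂ (p i) := by
  have e : (Submodule.pi Set.univ p) ≃ₗ[ℂ] ∀ i, p i :=
    { toFun := fun x i => ⟨x.1 i, x.2 i trivial⟩
      invFun := fun f => ⟨fun i => f i, fun i _ => (f i).2⟩
      map_add' := fun x y => rfl
      map_smul' := fun c x => rfl
      left_inv := fun x => rfl
      right_inv := fun f => rfl }
  rw [e.finrank_eq, Module.finrank_pi_fintype]

/-- Currying a block inclusion gives a `Pi.single`. -/
lemma curry_blockIncl {n : ℕ} (r : Fin n → ℕ) (i : Fin n) (v : Fin (r i + 1) → ℂ) :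
    Sigma.curry (blockIncl r i v) = (Pi.single i v : ∀ j, Fin (r j + 1) → ℂ) := by
  funext j x
  by_cases h : j = i
  · subst h
    simp [Sigma.curry, blockIncl, Pi.single_eq_same]
  · simp [Sigma.curry, blockIncl, h, Pi.single_eq_of_ne h]

/-- Theorem 1.2(2): the point `p_s` of `C_s` at parameter `t0`,
regarded as a point of the scroll `X`, lies in `Φ₂(X)` if and only if `p_s` is a
flex of `C_s`. -/
theorem statement2 {n : ℕ} (hn : 2 ≤ n) (r : Fin n → ℕ) (hr : ∀ i, 1 ≤ r i)
    (a : ∀ i : Fin n, ℂ → Fin (r i + 1) → ℂ)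
    (hent : ∀ i j, Differentiable ℂ fun t => a i t j)
    (hnd : ∀ i t, (curveJet (r i) (a i) 1 t).rank = 2)
    (t0 : ℂ) (s : Fin n) :
    (scrollJet r a 2 s t0 (fun _ => 0)).rank ≤ 2 * n ↔
      (curveJet (r s) (a s) 2 t0).rank = 2 := by
  classical
  have hrow_inl : ∀ l : Fin 3, scrollJet r a 2 s t0 (fun _ => 0) (Sum.inl l)
      = blockIncl r s (curveJet (r s) (a s) 2 t0 l) := by
    intro l; simp only [scrollJet]; norm_num; rfl
  have hrow_inr : ∀ q : {i : Fin n // i ≠ s} × Fin 2,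
      scrollJet r a 2 s t0 (fun _ => 0) (Sum.inr q)
        = blockIncl r q.1.1 (curveJet (r q.1.1) (a q.1.1) 1 t0 q.2) := fun q => rfl
  set W : ∀ i : Fin n, Submodule ℂ (Fin (r i + 1) → ℂ) := fun i =>
    if i = s then Submodule.span ℂ (Set.range (curveJet (r i) (a i) 2 t0))
    else Submodule.span ℂ (Set.range (curveJet (r i) (a i) 1 t0)) with hW
  have hWs : W s = Submodule.span ℂ (Set.range (curveJet (r s) (a s) 2 t0)) := by
    rw [hW]; simp
  have hWi : ∀ i, i ≠ s →
      W i = Submodule.span ℂ (Set.range (curveJet (r i) (a i) 1 t0)) := by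
    intro i h; rw [hW]; simp [h]
  let E : ((Σ j : Fin n, Fin (r j + 1)) → ℂ) ≃ₗ[ℂ] ∀ j : Fin n, (Fin (r j + 1) → ℂ) :=
    LinearEquiv.piCurry ℂ (fun _ _ => ℂ)
  have hE : ∀ x, (E : (((j : Fin n) × Fin (r j + 1)) → ℂ) →ₗ[ℂ]
      ∀ j : Fin n, (Fin (r j + 1) → ℂ)) x = Sigma.curry x := fun _ => rfl
  have hspan :
      Submodule.map (E : _ →ₗ[ℂ] _) (Submodule.span ℂ (Set.range (scrollJet r a 2 s t0 fun _ => 0)))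
        = Submodule.pi Set.univ W := by
    rw [Submodule.map_span]
    apply le_antisymm
    · rw [Submodule.span_le]
      rintro _ ⟨_, ⟨row, rfl⟩, rfl⟩
      rw [SetLike.mem_coe, Submodule.mem_pi]
      intro j _
      rcases row with l | q
      · rw [hE, hrow_inl, curry_blockIncl]
        by_cases h : j = s
        · subst h; rw [Pi.single_eq_same, hWs]
          exact Submodule.subset_span ⟨l, rfl⟩
        · rw [Pi.single_eq_of_ne h]; exact (W j).zero_mem
      · rw [hE, hrow_inr, curry_blockIncl]
        by_cases h : j = q.1.1
        · rw [h, Pi.single_eq_same, hWi q.1.1 q.1.2]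
          exact Submodule.subset_span ⟨q.2, rfl⟩
        · rw [Pi.single_eq_of_ne h]; exact (W j).zero_mem
    · rw [← Submodule.iSup_map_single (p := W)]
      apply iSup_le
      intro i
      by_cases h : i = s
      · rw [h, hWs, Submodule.map_span, Submodule.span_le]
        rintro _ ⟨_, ⟨l, rfl⟩, rfl⟩
        apply Submodule.subset_span
        refine ⟨scrollJet r a 2 s t0 (fun _ => 0) (Sum.inl l), ⟨Sum.inl l, rfl⟩, ?_⟩
        rw [hE, hrow_inl, curry_blockIncl, LinearMap.coe_single]
      · rw [hWi i h, Submodule.map_span, Submodule.span_le]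
        rintro _ ⟨_, ⟨l, rfl⟩, rfl⟩
        apply Submodule.subset_span
        refine ⟨scrollJet r a 2 s t0 (fun _ => 0) (Sum.inr ⟨⟨i, h⟩, l⟩),
          ⟨Sum.inr ⟨⟨i, h⟩, l⟩, rfl⟩, ?_⟩
        rw [hE, hrow_inr, curry_blockIncl, LinearMap.coe_single]
  have hfin : (scrollJet r a 2 s t0 fun _ => 0).rank
      = ∑ i, Module.finrank ℂ (W i) := by
    rw [Matrix.rank_eq_finrank_span_row, ← LinearEquiv.finrank_map_eq E,
      show Set.range (scrollJet r a 2 s t0 fun _ => 0).row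
        = Set.range (scrollJet r a 2 s t0 fun _ => 0) from rfl, hspan,
      finrank_pi_submodule]
  have hsum : ∑ i, Module.finrank ℂ (W i)
      = Module.finrank ℂ (W s) + (n - 1) * 2 := by
    rw [← Finset.add_sum_erase _ _ (Finset.mem_univ s)]
    congr 1
    have h2 : ∀ i ∈ Finset.univ.erase s, Module.finrank ℂ (W i) = 2 := by
      intro i hi
      rw [hWi i (Finset.ne_of_mem_erase hi)]
      exact (Matrix.rank_eq_finrank_span_row _).symm.trans (hnd i t0)
    rw [Finset.sum_congr rfl h2, Finset.sum_const,
      Finset.card_erase_of_mem (Finset.mem_univ s), Finset.card_univ,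
      Fintype.card_fin, smul_eq_mul]
  have hlow : 2 ≤ Module.finrank ℂ (W s) := by
    have hle : Submodule.span ℂ (Set.range (curveJet (r s) (a s) 1 t0)) ≤ W s := by
      rw [hWs, Submodule.span_le]
      rintro _ ⟨l, rfl⟩
      exact Submodule.subset_span ⟨l.castSucc, rfl⟩
    calc 2 = (curveJet (r s) (a s) 1 t0).rank := (hnd s t0).symm
      _ = Module.finrank ℂ
            (Submodule.span ℂ (Set.range (curveJet (r s) (a s) 1 t0))) :=
          Matrix.rank_eq_finrank_span_row _
      _ ≤ Module.finrank ℂ (W s) := Submodule.finrank_mono hle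
  have hrank2 : (curveJet (r s) (a s) 2 t0).rank = Module.finrank ℂ (W s) := by
    rw [hWs, Matrix.rank_eq_finrank_span_row]; rfl
  rw [hfin, hsum, hrank2]
  omega
end

section
/- (Theorem 1.2(3).) Fix t_0 ∈ ℂ and s ∈ {1,…,n}, and let u_i ∈ ℂ (i ≠ s) be arbitrary scalars. If rank M^{X,s}_2(t_0, u) ≤ 2n (i.e. the fibre point x with coordinates λ_s = 1, λ_i = u_i lies in Φ_2(X)), then rank M^s_2(t_0) = 2 (i.e. p_s is a flex of C_s). -/
open Matrix

-- auxiliary lemmas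
noncomputable def blockRestr {n : ℕ} (r : Fin n → ℕ) (s : Fin n) :
    ((Σ j : Fin n, Fin (r j + 1)) → ℂ) →ₗ[ℂ] (Fin (r s + 1) → ℂ) :=
  LinearMap.funLeft ℂ ℂ (fun j => ⟨s, j⟩)

lemma blockRestr_blockIncl_self {n : ℕ} (r : Fin n → ℕ) (s : Fin n) (v : Fin (r s + 1) → ℂ) :
    blockRestr r s (blockIncl r s v) = v := by
  funext j
  simp only [blockRestr, LinearMap.funLeft_apply, blockIncl]
  rw [dif_pos trivial]
  exact congrArg v (Fin.ext (by simp))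

lemma blockRestr_blockIncl_ne {n : ℕ} (r : Fin n → ℕ) (s i : Fin n) (hi : i ≠ s)
    (v : Fin (r i + 1) → ℂ) :
    blockRestr r s (blockIncl r i v) = 0 := by
  funext j
  simp only [blockRestr, LinearMap.funLeft_apply, blockIncl]
  rw [dif_neg (by simpa using hi.symm)]
  simp

lemma curveJet_two_castSucc {r : ℕ} (a : ℂ → Fin (r + 1) → ℂ) (t : ℂ) (m : Fin 2) :
    curveJet r a 2 t m.castSucc = curveJet r a 1 t m := by
  funext j
  simp [curveJet]

lemma curveJet_one_li {rr : ℕ} (a : ℂ → Fin (rr + 1) → ℂ) (t : ℂ)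
    (h : (curveJet rr a 1 t).rank = 2) :
    LinearIndependent ℂ (curveJet rr a 1 t) := by
  change LinearIndependent ℂ (curveJet rr a 1 t).row
  rw [linearIndependent_iff_card_eq_finrank_span, Set.finrank, ← Matrix.rank_eq_finrank_span_row, h]
  simp

/-- Theorem 1.2(3): if the fibre point with coordinates `λ_s = 1`,
`λ_i = u_i` lies in `Φ₂(X)`, then `p_s` is a flex of `C_s`. -/
theorem statement3 {n : ℕ} (hn : 2 ≤ n) (r : Fin n → ℕ) (hr : ∀ i, 1 ≤ r i)
    (a : ∀ i : Fin n, ℂ → Fin (r i + 1) → ℂ)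
    (hent : ∀ i j, Differentiable ℂ fun t => a i t j)
    (hnd : ∀ i t, (curveJet (r i) (a i) 1 t).rank = 2)
    (t0 : ℂ) (s : Fin n) (u : Fin n → ℂ)
    (h : (scrollJet r a 2 s t0 u).rank ≤ 2 * n) :
    (curveJet (r s) (a s) 2 t0).rank = 2 := by
  classical
  set M := scrollJet r a 2 s t0 u with hM
  set N := curveJet (r s) (a s) 2 t0 with hNdef
  set L := blockRestr r s with hL
  set S := Submodule.span ℂ (Set.range fun i => M i) with hS
  -- computation of L on the Sum.inl rows
  have hLrow : ∀ l : Fin 3, L (M (Sum.inl l)) = N l := by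
    intro l
    have hrow : M (Sum.inl l) = blockIncl r s (N l) +
        ∑ i ∈ Finset.univ.filter (fun i => i ≠ s),
          u i • blockIncl r i (curveJet (r i) (a i) 2 t0 l) := rfl
    rw [hrow, map_add, map_sum, blockRestr_blockIncl_self]
    have : ∀ i ∈ Finset.univ.filter (fun i => i ≠ s),
        L (u i • blockIncl r i (curveJet (r i) (a i) 2 t0 l)) = 0 := by
      intro i hi
      rw [_root_.map_smul, blockRestr_blockIncl_ne r s i (Finset.mem_filter.mp hi).2, smul_zero]
    rw [Finset.sum_eq_zero this, add_zero]
  -- the family of Sum.inr rows, rewritten via curveJet 1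
  set v : ({i : Fin n // i ≠ s} × Fin 2) → ((Σ j : Fin n, Fin (r j + 1)) → ℂ) :=
    fun q => blockIncl r q.1.1 (curveJet (r q.1.1) (a q.1.1) 1 t0 q.2) with hv
  have hvrow : ∀ q, M (Sum.inr q) = v q := by
    intro q
    show blockIncl r q.1.1 (curveJet (r q.1.1) (a q.1.1) 2 t0 q.2.castSucc) = v q
    rw [curveJet_two_castSucc]
  -- linear independence of v
  have hvli : LinearIndependent ℂ v := by
    rw [Fintype.linearIndependent_iff]
    intro g hg q0
    have h1 : ∑ q, g q • blockRestr r q0.1.1 (v q) = 0 := by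
      have := congrArg (blockRestr r q0.1.1) hg
      rw [map_sum] at this
      simpa [_root_.map_smul] using this
    rw [Fintype.sum_prod_type] at h1
    rw [Finset.sum_eq_single q0.1 (fun i _ hne => ?_) (fun hm => absurd (Finset.mem_univ _) hm)]
      at h1
    · have h2 : ∑ m : Fin 2,
          g (q0.1, m) • curveJet (r q0.1.1) (a q0.1.1) 1 t0 m = 0 := by
        simpa [hv, blockRestr_blockIncl_self] using h1
      have := Fintype.linearIndependent_iff.mp (curveJet_one_li _ _ (hnd q0.1.1 t0)) _ h2 q0.2
      simpa using this
    · apply Finset.sum_eq_zero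
      intro m _
      rw [hv]
      simp only
      rw [blockRestr_blockIncl_ne r q0.1.1 i.1 (fun he => hne (Subtype.ext he)), smul_zero]
  -- span of v sits in S ⊓ ker L
  have hvmem : ∀ q, v q ∈ S ⊓ LinearMap.ker L := by
    intro q
    refine Submodule.mem_inf.mpr ⟨Submodule.subset_span ⟨Sum.inr q, (hvrow q)⟩, ?_⟩
    rw [LinearMap.mem_ker, hL, hv]
    exact blockRestr_blockIncl_ne r s q.1.1 q.1.2 _
  have hKle : Submodule.span ℂ (Set.range v) ≤ S ⊓ LinearMap.ker L :=
    Submodule.span_le.mpr (Set.range_subset_iff.mpr hvmem)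
  have hcard : Fintype.card ({i : Fin n // i ≠ s} × Fin 2) = (n - 1) * 2 := by
    rw [Fintype.card_prod, Fintype.card_fin]
    congr 1
    simp [Ne, Fintype.card_subtype_compl, Fintype.card_subtype_eq]
  have hKdim : (n - 1) * 2 ≤ Module.finrank ℂ ↥(S ⊓ LinearMap.ker L) := by
    have h1 := finrank_span_eq_card hvli
    rw [hcard] at h1
    calc (n - 1) * 2 = Module.finrank ℂ ↥(Submodule.span ℂ (Set.range v)) := h1.symm
      _ ≤ _ := Submodule.finrank_mono hKle
  -- image of S under L is the row space of N
  have hmap : Submodule.map L S = Submodule.span ℂ (Set.range fun l => N l) := by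
    rw [hS, Submodule.map_span]
    apply le_antisymm
    · rw [Submodule.span_le]
      rintro _ ⟨_, ⟨row, rfl⟩, rfl⟩
      cases row with
      | inl l => exact Submodule.subset_span ⟨l, (hLrow l).symm⟩
      | inr q =>
          have : L (M (Sum.inr q)) = 0 := by
            rw [hvrow q, hv]
            exact blockRestr_blockIncl_ne r s q.1.1 q.1.2 _
          rw [this]
          exact Submodule.zero_mem _
    · rw [Submodule.span_le]
      rintro _ ⟨l, rfl⟩
      exact Submodule.subset_span ⟨M (Sum.inl l), ⟨Sum.inl l, rfl⟩, hLrow l⟩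
  -- rank-nullity
  have hrn : Module.finrank ℂ ↥(Submodule.map L S) +
      Module.finrank ℂ ↥(S ⊓ LinearMap.ker L) = Module.finrank ℂ ↥S := by
    have h1 := LinearMap.finrank_range_add_finrank_ker (L.domRestrict S)
    rw [LinearMap.range_domRestrict] at h1
    have h2 : Module.finrank ℂ ↥(LinearMap.ker (L.domRestrict S)) =
        Module.finrank ℂ ↥(S ⊓ LinearMap.ker L) := by
      rw [LinearMap.ker_domRestrict, ← Submodule.map_comap_subtype,
        Submodule.finrank_map_subtype_eq]
    rw [h2] at h1
    exact h1
  -- assemble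
  have hMS : M.rank = Module.finrank ℂ ↥S := Matrix.rank_eq_finrank_span_row M
  have hNS : N.rank = Module.finrank ℂ ↥(Submodule.map L S) := by
    rw [hmap, Matrix.rank_eq_finrank_span_row]
    rfl
  have hNlow : 2 ≤ N.rank := by
    have hsub : Submodule.span ℂ (Set.range (curveJet (r s) (a s) 1 t0)) ≤
        Submodule.span ℂ (Set.range N) := by
      rw [Submodule.span_le]
      rintro _ ⟨m, rfl⟩
      exact Submodule.subset_span ⟨m.castSucc, curveJet_two_castSucc (a s) t0 m⟩
    have := Submodule.finrank_mono hsub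
    change Module.finrank ℂ ↥(Submodule.span ℂ (Set.range (curveJet (r s) (a s) 1 t0).row)) ≤
      Module.finrank ℂ ↥(Submodule.span ℂ (Set.range N.row)) at this
    rw [← Matrix.rank_eq_finrank_span_row, ← Matrix.rank_eq_finrank_span_row, hnd s t0] at this
    exact this
  have hup : N.rank + (n - 1) * 2 ≤ 2 * n := by
    calc N.rank + (n - 1) * 2
        ≤ Module.finrank ℂ ↥(Submodule.map L S) + Module.finrank ℂ ↥(S ⊓ LinearMap.ker L) := by
          rw [hNS]; exact Nat.add_le_add_left hKdim _
      _ = Module.finrank ℂ ↥S := hrn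
      _ = M.rank := hMS.symm
      _ ≤ 2 * n := h
  omega
end

section
/- (Proposition 1.4.) Fix t_0 ∈ ℂ, and suppose s ∈ {1,…,n} and scalars u_i ∈ ℂ (i ≠ s) are such that rank M^{X,s}_2(t_0, u) ≤ 2n (i.e. the corresponding fibre point x lies in Φ_2(X)). Then the row space of M^{X,s}_2(t_0, u) equals the direct sum ⨁_{i=1}^n ι_i(row space of M^i_1(t_0)) of the (embedded) tangent-line cones of the curves C_i at parameter t_0; in particular rank M^{X,s}_2(t_0, u) = 2n exactly, and the row space (hence Osc^2_x(X), a projective (2n−1)-plane) is the same for all choices of s and u with rank M^{X,s}_2(t_0, u) ≤ 2n. -/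
open Matrix

/-- Proposition 1.4: if a fibre point lies in `Φ₂(X)`, then the row
space of its second jet matrix equals the (direct) sum of the embedded tangent-line
cones `ι_i(row space of M^i_1(t0))` of the curves; in particular the rank is
exactly `2n`, and the second osculating space is the same for all such points of
the fibre (the right-hand side does not depend on `s`, `u`). -/
theorem statement5 {n : ℕ} (hn : 2 ≤ n) (r : Fin n → ℕ) (hr : ∀ i, 1 ≤ r i)
    (a : ∀ i : Fin n, ℂ → Fin (r i + 1) → ℂ)
    (hent : ∀ i j, Differentiable ℂ fun t => a i t j)
    (hnd : ∀ i t, (curveJet (r i) (a i) 1 t).rank = 2)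
    (t0 : ℂ) (s : Fin n) (u : Fin n → ℂ)
    (h : (scrollJet r a 2 s t0 u).rank ≤ 2 * n) :
    rowSpace (scrollJet r a 2 s t0 u) =
      Submodule.span ℂ (⋃ i : Fin n,
        Set.range fun l : Fin 2 => blockIncl r i (curveJet (r i) (a i) 1 t0 l)) ∧
    (scrollJet r a 2 s t0 u).rank = 2 * n := by
  classical
  set M := scrollJet r a 2 s t0 u with hM
  set v : Fin n × Fin 2 → ((Σ j : Fin n, Fin (r j + 1)) → ℂ) :=
    fun p => blockIncl r p.1 (curveJet (r p.1) (a p.1) 1 t0 p.2) with hv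
  have hrange : Set.range v =
      ⋃ i : Fin n, Set.range fun l : Fin 2 => blockIncl r i (curveJet (r i) (a i) 1 t0 l) := by
    ext x
    simp only [Set.mem_range, Set.mem_iUnion, Prod.exists, hv]
  -- rows of each first jet are linearly independent
  have hrows : ∀ i : Fin n,
      LinearIndependent ℂ (fun l : Fin 2 => curveJet (r i) (a i) 1 t0 l) := by
    intro i
    rw [linearIndependent_iff_card_eq_finrank_span]
    have h2 := (curveJet (r i) (a i) 1 t0).rank_eq_finrank_span_row
    rw [hnd i t0] at h2
    rw [Fintype.card_fin]; exact h2
  -- the family v is linearly independent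
  have hv_indep : LinearIndependent ℂ v := by
    rw [Fintype.linearIndependent_iff]
    intro c hc p0
    obtain ⟨i0, l0⟩ := p0
    have hsum : ∀ j : Fin (r i0 + 1),
        ∑ l : Fin 2, c (i0, l) * curveJet (r i0) (a i0) 1 t0 l j = 0 := by
      intro j
      have h1 := congrFun hc ⟨i0, j⟩
      simp only [Finset.sum_apply, Pi.smul_apply, Pi.zero_apply, smul_eq_mul] at h1
      rw [Fintype.sum_prod_type] at h1
      rw [Finset.sum_eq_single i0 (fun i _ hi => by
        simp [hv, blockIncl, Ne.symm hi]) (fun hmem => absurd (Finset.mem_univ i0) hmem)]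
        at h1
      simpa [hv, blockIncl] using h1
    have := (Fintype.linearIndependent_iff.mp (hrows i0)) (fun l => c (i0, l)) ?_ l0
    · exact this
    · funext j
      simpa [Finset.sum_apply, smul_eq_mul] using hsum j
  -- every v p lies in the row space of M
  have hrow_inr : ∀ (i : {i : Fin n // i ≠ s}) (l : Fin 2),
      M (Sum.inr (i, l)) = v (i.1, l) := fun i l => rfl
  have hrow_inl : ∀ l : Fin 2, M (Sum.inl l.castSucc) =
      v (s, l) + ∑ i ∈ Finset.univ.filter (fun i => i ≠ s), u i • v (i, l) :=
    fun l => rfl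
  have memR : ∀ p, v p ∈ rowSpace M := by
    rintro ⟨i, l⟩
    by_cases hi : i = s
    · subst hi
      have hrew : v (i, l) = M (Sum.inl l.castSucc) -
          ∑ j ∈ Finset.univ.filter (fun j => j ≠ i), u j • v (j, l) :=
        eq_sub_of_add_eq (hrow_inl l).symm
      rw [hrew]
      refine sub_mem ?_ (Submodule.sum_mem _ fun j hj => Submodule.smul_mem _ _ ?_)
      · exact Submodule.subset_span ⟨Sum.inl l.castSucc, rfl⟩
      · rw [← hrow_inr ⟨j, (Finset.mem_filter.mp hj).2⟩ l]
        exact Submodule.subset_span ⟨Sum.inr (⟨j, (Finset.mem_filter.mp hj).2⟩, l), rfl⟩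
    · rw [← hrow_inr ⟨i, hi⟩ l]
      exact Submodule.subset_span ⟨Sum.inr (⟨i, hi⟩, l), rfl⟩
  have hTR : Submodule.span ℂ (Set.range v) ≤ rowSpace M :=
    Submodule.span_le.mpr (by rintro x ⟨p, rfl⟩; exact memR p)
  -- dimensions
  have hfinT : Module.finrank ℂ (Submodule.span ℂ (Set.range v)) = 2 * n := by
    have := finrank_span_eq_card hv_indep
    rw [this, Fintype.card_prod, Fintype.card_fin, Fintype.card_fin, Nat.mul_comm]
  have hfinR : M.rank = Module.finrank ℂ (rowSpace M) := by
    rw [rank_eq_finrank_span_row]; rfl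
  have hle : Module.finrank ℂ (rowSpace M) ≤
      Module.finrank ℂ (Submodule.span ℂ (Set.range v)) := by
    rw [hfinT, ← hfinR]; exact h
  have hEq : Submodule.span ℂ (Set.range v) = rowSpace M :=
    Submodule.eq_of_le_of_finrank_le hTR hle
  constructor
  · rw [← hrange, hEq]
  · rw [hfinR, ← hEq, hfinT]
end

section
/- (Remark 2.2.) Fix t_0 ∈ ℂ, s ∈ {1,…,n} and an integer k ≥ 2. If rank M^{X,s}_k(t_0, 0) ≤ nk (i.e. the point p_s of C_s lies in Φ_k(X)), then either rank M^s_k(t_0) ≤ k (i.e. p_s ∈ Φ_k(C_s)), or there exists j ≠ s with rank M^j_{k-1}(t_0) ≤ k−1 (i.e. p_j ∈ Φ_{k−1}(C_j)). -/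
open Matrix

/-- Remark 2.2: if `p_s ∈ Φ_k(X)`, then either `p_s ∈ Φ_k(C_s)`, or
`p_j ∈ Φ_{k-1}(C_j)` for some `j ≠ s`. -/
theorem statement7 {n : ℕ} (hn : 2 ≤ n) (r : Fin n → ℕ) (hr : ∀ i, 1 ≤ r i)
    (a : ∀ i : Fin n, ℂ → Fin (r i + 1) → ℂ)
    (hent : ∀ i j, Differentiable ℂ fun t => a i t j)
    (hnd : ∀ i t, (curveJet (r i) (a i) 1 t).rank = 2)
    (t0 : ℂ) (s : Fin n) (k : ℕ) (hk : 2 ≤ k)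
    (h : (scrollJet r a k s t0 (fun _ => 0)).rank ≤ n * k) :
    (curveJet (r s) (a s) k t0).rank ≤ k ∨
      ∃ j, j ≠ s ∧ (curveJet (r j) (a j) (k - 1) t0).rank ≤ k - 1 := by
  
  classical
  by_contra hcon
  push_neg at hcon
  obtain ⟨hA, hB⟩ := hcon
  set M := scrollJet r a k s t0 (fun _ => 0) with hM
  -- rows of `M^s_k(t0)` are linearly independent
  have hAind : LinearIndependent ℂ (curveJet (r s) (a s) k t0).row := by
    have hle := (curveJet (r s) (a s) k t0).rank_le_card_height
    rw [linearIndependent_iff_card_eq_finrank_span, Set.finrank,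
      ← Matrix.rank_eq_finrank_span_row]
    simp only [Fintype.card_fin] at *
    omega
  -- rows of `M^j_{k-1}(t0)` are linearly independent for `j ≠ s`
  have hBind : ∀ j, j ≠ s → LinearIndependent ℂ (curveJet (r j) (a j) (k - 1) t0).row := by
    intro j hj
    have hle := (curveJet (r j) (a j) (k - 1) t0).rank_le_card_height
    have hgt := hB j hj
    rw [linearIndependent_iff_card_eq_finrank_span, Set.finrank,
      ← Matrix.rank_eq_finrank_span_row]
    simp only [Fintype.card_fin] at *
    omega
  have hkk : k = (k - 1) + 1 := by omega
  have hCind : ∀ j, j ≠ s → LinearIndependent ℂ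
      (fun m : Fin k => (fun c => iteratedDeriv (m : ℕ) (fun t => a j t c) t0 :
        Fin (r j + 1) → ℂ)) := by
    intro j hj
    have h1 := (hBind j hj).comp (Fin.cast hkk) (Fin.cast_injective _)
    have heq : (fun m : Fin k => (fun c => iteratedDeriv (m : ℕ) (fun t => a j t c) t0 :
        Fin (r j + 1) → ℂ)) = (curveJet (r j) (a j) (k - 1) t0).row ∘ (Fin.cast hkk) := by
      funext m c
      rfl
    rw [heq]
    exact h1
  -- entry computations
  have hbi_self : ∀ (i : Fin n) (v : Fin (r i + 1) → ℂ) (c : Fin (r i + 1)),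
      blockIncl r i v ⟨i, c⟩ = v c := by
    intro i v c
    simp [blockIncl]
  have hbi_ne : ∀ (i j : Fin n), i ≠ j → ∀ (v : Fin (r i + 1) → ℂ) (c : Fin (r j + 1)),
      blockIncl r i v ⟨j, c⟩ = 0 := by
    intro i j hij v c
    simp [blockIncl, Ne.symm hij]
  have hMl : ∀ (l : Fin (k + 1)) (j : Fin n) (c : Fin (r j + 1)),
      M (Sum.inl l) ⟨j, c⟩ = blockIncl r s (curveJet (r s) (a s) k t0 l) ⟨j, c⟩ := by
    intro l j c
    simp [hM, scrollJet]
  have hMr : ∀ (q : {i : Fin n // i ≠ s} × Fin k) (j : Fin n) (c : Fin (r j + 1)),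
      M (Sum.inr q) ⟨j, c⟩ =
        blockIncl r q.1.1 (curveJet (r q.1.1) (a q.1.1) k t0 q.2.castSucc) ⟨j, c⟩ := by
    intro q j c
    simp [hM, scrollJet]
  -- rows of the scroll jet matrix at u = 0 are linearly independent
  have hMind : LinearIndependent ℂ M.row := by
    rw [Fintype.linearIndependent_iff]
    intro g hg
    have hgj : ∀ (j : Fin n) (c : Fin (r j + 1)),
        (∑ row, g row • M row ⟨j, c⟩) = 0 := by
      intro j c
      have h0 := congrFun hg ⟨j, c⟩
      simpa [Matrix.row] using h0
    have hins : ∀ l, g (Sum.inl l) = 0 := by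
      have h0 : ∑ l, g (Sum.inl l) • curveJet (r s) (a s) k t0 l = 0 := by
        funext c
        have hthis := hgj s c
        rw [Fintype.sum_sum_type] at hthis
        have h1 : ∀ q : {i : Fin n // i ≠ s} × Fin k,
            g (Sum.inr q) • M (Sum.inr q) ⟨s, c⟩ = 0 := by
          intro q
          rw [hMr, hbi_ne _ _ q.1.2]
          simp
        simp only [h1, Finset.sum_const_zero, add_zero] at hthis
        simp only [hMl, hbi_self] at hthis
        simpa using hthis
      exact Fintype.linearIndependent_iff.mp hAind (fun l => g (Sum.inl l)) h0
    have hinr : ∀ q : {i : Fin n // i ≠ s} × Fin k, g (Sum.inr q) = 0 := by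
      rintro ⟨⟨j, hj⟩, m⟩
      have h0 : ∑ m' : Fin k, g (Sum.inr (⟨j, hj⟩, m')) •
          (fun c => iteratedDeriv (m' : ℕ) (fun t => a j t c) t0 : Fin (r j + 1) → ℂ) = 0 := by
        funext c
        have hthis := hgj j c
        rw [Fintype.sum_sum_type] at hthis
        have h1 : ∀ l : Fin (k + 1), g (Sum.inl l) • M (Sum.inl l) ⟨j, c⟩ = 0 := by
          intro l
          rw [hMl, hbi_ne _ _ (Ne.symm hj)]
          simp
        simp only [h1, Finset.sum_const_zero, zero_add] at hthis
        rw [Fintype.sum_prod_type] at hthis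
        rw [Finset.sum_eq_single (⟨j, hj⟩ : {i : Fin n // i ≠ s})] at hthis
        · simp only [hMr, hbi_self] at hthis
          simpa [curveJet] using hthis
        · intro b _ hb
          refine Finset.sum_eq_zero fun m' _ => ?_
          rw [hMr, hbi_ne _ _ (fun hbj => hb (Subtype.ext hbj))]
          simp
        · simp
      exact Fintype.linearIndependent_iff.mp (hCind j hj)
        (fun m' => g (Sum.inr (⟨j, hj⟩, m'))) h0 m
    rintro (l | q)
    · exact hins l
    · exact hinr q
  -- conclude: the rank is n*k + 1 > n*k
  rw [hMind.rank_matrix] at h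
  have hcard : Fintype.card (Fin (k + 1) ⊕ ({i : Fin n // i ≠ s} × Fin k)) =
      (k + 1) + (n - 1) * k := by
    simp [Fintype.card_subtype_compl]
  rw [hcard] at h
  obtain ⟨n', rfl⟩ : ∃ n', n = n' + 1 := ⟨n - 1, by omega⟩
  simp only [Nat.add_sub_cancel, Nat.succ_mul] at h
  have hx : ∃ x, n' * k = x := ⟨_, rfl⟩
  obtain ⟨x, hx⟩ := hx
  rw [hx] at h
  omega
end

section
/- (Proposition 2.4, first part.) Fix t_0 ∈ ℂ, an integer k ≥ 2, and a nonempty subset F ⊆ {1,…,n} such that rank M^i_k(t_0) ≤ k for every i ∈ F (i.e. p_i ∈ Φ_k(C_i) for i ∈ F). Then every point of the fibre over t_0 supported on F lies in Φ_k(X): for every s ∈ F and all scalars u_i ∈ ℂ (i ≠ s) with u_i = 0 whenever i ∉ F, one has rank M^{X,s}_k(t_0, u) ≤ nk. (Geometrically: the linear span ⟨p_i : i ∈ F⟩ inside the fibre is contained in Φ_k(X).) -/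
open Matrix

/-- `blockIncl` as a linear map. -/
noncomputable def blockInclLM {n : ℕ} (r : Fin n → ℕ) (i : Fin n) :
    (Fin (r i + 1) → ℂ) →ₗ[ℂ] ((Σ j : Fin n, Fin (r j + 1)) → ℂ) where
  toFun := blockIncl r i
  map_add' v w := by funext p; simp only [blockIncl, Pi.add_apply]; split <;> simp
  map_smul' c v := by funext p; simp only [blockIncl, Pi.smul_apply, RingHom.id_apply]
                      split <;> simp

lemma finrank_finset_sup_le {V : Type*} [AddCommGroup V] [Module ℂ V] [FiniteDimensional ℂ V]
    {ι : Type*} [DecidableEq ι] (t : Finset ι) (W : ι → Submodule ℂ V) :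
    Module.finrank ℂ (↥(t.sup W)) ≤ ∑ i ∈ t, Module.finrank ℂ (↥(W i)) := by
  induction t using Finset.induction with
  | empty => simp
  | insert _ _ h ih =>
    rw [Finset.sup_insert, Finset.sum_insert h]
    exact (Submodule.finrank_add_le_finrank_add_finrank _ _).trans (by gcongr)

/-- Proposition 2.4, first part: if `p_i ∈ Φ_k(C_i)` for every `i` in
a nonempty set `F`, then every point of the fibre over `t0` supported on `F` lies in
`Φ_k(X)`. -/
theorem statement9 {n : ℕ} (hn : 2 ≤ n) (r : Fin n → ℕ) (hr : ∀ i, 1 ≤ r i)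
    (a : ∀ i : Fin n, ℂ → Fin (r i + 1) → ℂ)
    (hent : ∀ i j, Differentiable ℂ fun t => a i t j)
    (hnd : ∀ i t, (curveJet (r i) (a i) 1 t).rank = 2)
    (t0 : ℂ) (k : ℕ) (hk : 2 ≤ k)
    (F : Finset (Fin n)) (hF : F.Nonempty)
    (hflex : ∀ i ∈ F, (curveJet (r i) (a i) k t0).rank ≤ k)
    (s : Fin n) (hs : s ∈ F) (u : Fin n → ℂ)
    (hu : ∀ i, i ≠ s → i ∉ F → u i = 0) :
    (scrollJet r a k s t0 u).rank ≤ n * k := by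
  classical
  -- The block submodules: full row space of `M^i_k` for `i ∈ F`,
  -- span of the first `k` rows otherwise.
  set U : ∀ i : Fin n, Submodule ℂ (Fin (r i + 1) → ℂ) := fun i =>
    if i ∈ F then Submodule.span ℂ (Set.range (curveJet (r i) (a i) k t0))
    else Submodule.span ℂ (Set.range fun m : Fin k => curveJet (r i) (a i) k t0 m.castSucc)
    with hU
  have hUF : ∀ i, i ∈ F →
      U i = Submodule.span ℂ (Set.range (curveJet (r i) (a i) k t0)) := by
    intro i hi; simp only [hU]; rw [if_pos hi]
  have hUN : ∀ i, i ∉ F →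
      U i = Submodule.span ℂ (Set.range fun m : Fin k => curveJet (r i) (a i) k t0 m.castSucc) := by
    intro i hi; simp only [hU]; rw [if_neg hi]
  have hUrank : ∀ i, Module.finrank ℂ (U i) ≤ k := by
    intro i
    by_cases hi : i ∈ F
    · have h2 := (curveJet (r i) (a i) k t0).rank_eq_finrank_span_row
      rw [hUF i hi]
      exact h2.symm.trans_le (hflex i hi)
    · rw [hUN i hi]
      simpa [Set.finrank] using finrank_range_le_card (R := ℂ)
        (fun m : Fin k => curveJet (r i) (a i) k t0 m.castSucc)
  have hrowF : ∀ i ∈ F, ∀ l : Fin (k + 1), curveJet (r i) (a i) k t0 l ∈ U i := by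
    intro i hi l
    rw [hUF i hi]
    exact Submodule.subset_span ⟨l, rfl⟩
  have hrowC : ∀ i, ∀ m : Fin k, curveJet (r i) (a i) k t0 m.castSucc ∈ U i := by
    intro i m
    by_cases hi : i ∈ F
    · exact hrowF i hi _
    · rw [hUN i hi]
      exact Submodule.subset_span ⟨m, rfl⟩
  set T : Submodule ℂ ((Σ j : Fin n, Fin (r j + 1)) → ℂ) :=
    Finset.univ.sup (fun i => (U i).map (blockInclLM r i)) with hT
  have hmemT : ∀ i v, v ∈ U i → blockIncl r i v ∈ T := by
    intro i v hv
    have hle : (U i).map (blockInclLM r i) ≤ T :=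
      Finset.le_sup (f := fun i => (U i).map (blockInclLM r i)) (Finset.mem_univ i)
    exact hle (Submodule.mem_map_of_mem hv)
  have hTrank : Module.finrank ℂ T ≤ n * k := by
    refine (finrank_finset_sup_le _ _).trans ?_
    calc ∑ i : Fin n, Module.finrank ℂ ((U i).map (blockInclLM r i))
        ≤ ∑ i : Fin n, Module.finrank ℂ (U i) := by
          gcongr with i
          exact Submodule.finrank_map_le _ _
      _ ≤ ∑ _i : Fin n, k := by gcongr with i; exact hUrank i
      _ = n * k := by simp [Finset.sum_const, mul_comm]
  rw [Matrix.rank_eq_finrank_span_row]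
  refine le_trans (Submodule.finrank_mono ?_) hTrank
  rw [Submodule.span_le]
  rintro _ ⟨row, rfl⟩
  match row with
  | Sum.inl l =>
    show blockIncl r s (curveJet (r s) (a s) k t0 l) +
        ∑ i ∈ Finset.univ.filter (fun i => i ≠ s),
          u i • blockIncl r i (curveJet (r i) (a i) k t0 l) ∈ T
    refine add_mem (hmemT s _ (hrowF s hs l)) (Submodule.sum_mem _ ?_)
    intro i hi
    by_cases hiF : i ∈ F
    · exact Submodule.smul_mem _ _ (hmemT i _ (hrowF i hiF l))
    · rw [hu i (by simpa using hi) hiF, zero_smul]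
      exact zero_mem _
  | Sum.inr q =>
    exact hmemT q.1.1 _ (hrowC q.1.1 q.2)
end

section
/- (Proposition 2.4, second part.) Fix t_0 ∈ ℂ, an integer k ≥ 2, and a nonempty proper subset F ⊊ {1,…,n} such that: rank M^i_k(t_0) ≤ k and rank M^i_{k-1}(t_0) = k for every i ∈ F (i.e. p_i ∈ Φ_k(C_i) ∖ Φ_{k−1}(C_i)), and rank M^i_k(t_0) = k+1 for every i ∉ F (i.e. p_i ∉ Φ_k(C_i)). Then for every s ∈ {1,…,n} and all scalars u_i ∈ ℂ (i ≠ s): rank M^{X,s}_k(t_0, u) ≤ nk if and only if {s} ∪ {i ≠ s : u_i ≠ 0} ⊆ F. (Geometrically: Φ_k(X) ∩ f_p = ⟨p_i : i ∈ F⟩.) -/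
open Matrix

namespace S10

open Submodule Module

variable {n : ℕ} (r : Fin n → ℕ)

/-- `blockIncl` as a linear map. -/
noncomputable def inclL (i : Fin n) :
    (Fin (r i + 1) → ℂ) →ₗ[ℂ] ((Σ j : Fin n, Fin (r j + 1)) → ℂ) where
  toFun := blockIncl r i
  map_add' v w := by
    funext p; simp only [blockIncl, Pi.add_apply]; split <;> simp
  map_smul' c v := by
    funext p; simp only [blockIncl, Pi.smul_apply, RingHom.id_apply]; split <;> simp

/-- The block projection as a linear map. -/
noncomputable def projL (i : Fin n) :
    ((Σ j : Fin n, Fin (r j + 1)) → ℂ) →ₗ[ℂ] (Fin (r i + 1) → ℂ) :=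
  LinearMap.funLeft ℂ ℂ fun p => ⟨i, p⟩

@[simp] lemma proj_incl_same (i : Fin n) (v : Fin (r i + 1) → ℂ) :
    projL r i (inclL r i v) = v := by
  funext p
  simp [projL, inclL, blockIncl, LinearMap.funLeft]

@[simp] lemma proj_incl_ne {i j : Fin n} (h : j ≠ i) (v : Fin (r i + 1) → ℂ) :
    projL r j (inclL r i v) = 0 := by
  funext p
  simp [projL, inclL, blockIncl, LinearMap.funLeft, h]

lemma sum_incl_proj (f : (Σ j : Fin n, Fin (r j + 1)) → ℂ) :
    ∑ i, inclL r i (projL r i f) = f := by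
  funext p
  obtain ⟨j, q⟩ := p
  rw [Finset.sum_apply]
  rw [Finset.sum_eq_single j]
  · simp [inclL, projL, blockIncl, LinearMap.funLeft]
  · intro i _ hij
    simp [inclL, projL, blockIncl, LinearMap.funLeft, Ne.symm hij]
  · simp

lemma range_fin_eq_image {β : Type*} (g : ℕ → β) (m : ℕ) :
    (Set.range fun l : Fin m => g l) = g '' Set.Iio m := by
  ext x
  constructor
  · rintro ⟨l, rfl⟩; exact ⟨l, l.isLt, rfl⟩
  · rintro ⟨l, hl, rfl⟩; exact ⟨⟨l, hl⟩, rfl⟩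

/-- The `l`-th derivative row of a parametrized curve. -/
noncomputable def D (r : ℕ) (a : ℂ → Fin (r + 1) → ℂ) (t0 : ℂ) (l : ℕ) :
    Fin (r + 1) → ℂ :=
  fun j => iteratedDeriv l (fun s => a s j) t0

/-- The span of the first `k` derivative rows. -/
noncomputable def Rsp (r : ℕ) (a : ℂ → Fin (r + 1) → ℂ) (t0 : ℂ) (k : ℕ) :
    Submodule ℂ (Fin (r + 1) → ℂ) :=
  Submodule.span ℂ (D r a t0 '' Set.Iio k)

lemma mem_Rsp_of_lt {r : ℕ} {a : ℂ → Fin (r + 1) → ℂ} {t0 : ℂ} {k m : ℕ} (hm : m < k) :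
    D r a t0 m ∈ Rsp r a t0 k :=
  Submodule.subset_span ⟨m, hm, rfl⟩

lemma rank_curveJet (r : ℕ) (a : ℂ → Fin (r + 1) → ℂ) (t0 : ℂ) (p : ℕ) :
    (curveJet r a p t0).rank = finrank ℂ (Rsp r a t0 (p + 1)) := by
  rw [Matrix.rank_eq_finrank_span_row, Rsp, ← range_fin_eq_image (D r a t0) (p + 1)]
  rfl

lemma Rsp_succ (r : ℕ) (a : ℂ → Fin (r + 1) → ℂ) (t0 : ℂ) (k : ℕ) :
    Rsp r a t0 (k + 1) = Submodule.span ℂ {D r a t0 k} ⊔ Rsp r a t0 k := by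
  rw [Rsp, show Set.Iio (k + 1) = insert k (Set.Iio k) by
      ext x; simp only [Set.mem_Iio, Set.mem_insert_iff]; omega,
    Set.image_insert_eq, Submodule.span_insert]
  rfl

lemma finrank_sup_singleton_le {W : Type*} [AddCommGroup W] [Module ℂ W]
    [FiniteDimensional ℂ W] (x : W) (A : Submodule ℂ W) :
    finrank ℂ ↥(Submodule.span ℂ {x} ⊔ A) ≤ finrank ℂ A + 1 := by
  calc finrank ℂ ↥(Submodule.span ℂ {x} ⊔ A)
      ≤ finrank ℂ (Submodule.span ℂ {x}) + finrank ℂ A :=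
        Submodule.finrank_add_le_finrank_add_finrank _ _
    _ ≤ 1 + finrank ℂ A := by
        have : finrank ℂ (Submodule.span ℂ ({x} : Set W)) ≤ 1 := by
          simpa using finrank_span_le_card ({x} : Set W)
        omega
    _ = finrank ℂ A + 1 := by omega

lemma finrank_Rsp_le (r : ℕ) (a : ℂ → Fin (r + 1) → ℂ) (t0 : ℂ) {k : ℕ} (hk : 1 ≤ k) :
    finrank ℂ (Rsp r a t0 k) ≤ k := by
  obtain ⟨m, rfl⟩ : ∃ m, k = m + 1 := ⟨k - 1, by omega⟩
  have h := rank_curveJet r a t0 m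
  have h2 := Matrix.rank_le_card_height (curveJet r a m t0)
  rw [h] at h2
  simpa using h2

lemma finrank_Rsp_eq (r : ℕ) (a : ℂ → Fin (r + 1) → ℂ) (t0 : ℂ) {k : ℕ} (hk : 1 ≤ k)
    (h : (curveJet r a k t0).rank = k + 1) :
    finrank ℂ (Rsp r a t0 k) = k := by
  have hle := finrank_Rsp_le r a t0 hk
  rw [rank_curveJet, Rsp_succ] at h
  have := finrank_sup_singleton_le (D r a t0 k) (Rsp r a t0 k)
  omega

lemma finrank_Rsp_eq' (r : ℕ) (a : ℂ → Fin (r + 1) → ℂ) (t0 : ℂ) {k : ℕ} (hk : 1 ≤ k)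
    (h : (curveJet r a (k - 1) t0).rank = k) :
    finrank ℂ (Rsp r a t0 k) = k := by
  have h2 := rank_curveJet r a t0 (k - 1)
  have h3 : finrank ℂ ↥(Rsp r a t0 (k - 1 + 1)) = k := by rw [← h2]; exact h
  rwa [show k - 1 + 1 = k by omega] at h3

lemma mem_iff (r : ℕ) (a : ℂ → Fin (r + 1) → ℂ) (t0 : ℂ) {k : ℕ}
    (hfin : finrank ℂ (Rsp r a t0 k) = k) :
    D r a t0 k ∈ Rsp r a t0 k ↔ (curveJet r a k t0).rank ≤ k := by
  rw [rank_curveJet, Rsp_succ]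
  constructor
  · intro h
    have hsup : Submodule.span ℂ {D r a t0 k} ⊔ Rsp r a t0 k = Rsp r a t0 k :=
      sup_eq_right.mpr ((Submodule.span_singleton_le_iff_mem _ _).mpr h)
    rw [hsup, hfin]
  · intro h
    by_contra hmem
    have hlt : Rsp r a t0 k < Submodule.span ℂ {D r a t0 k} ⊔ Rsp r a t0 k := by
      refine lt_of_le_of_ne le_sup_right fun he => hmem ?_
      rw [he]
      exact Submodule.mem_sup_left (Submodule.mem_span_singleton_self _)
    have := Submodule.finrank_lt_finrank_of_lt hlt
    omega

end S10

/-- Proposition 2.4, second part: if `F` is a nonempty proper subset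
with `p_i ∈ Φ_k(C_i) ∖ Φ_{k-1}(C_i)` for `i ∈ F` and `p_i ∉ Φ_k(C_i)` for `i ∉ F`,
then a point of the fibre over `t0` lies in `Φ_k(X)` iff it is supported on `F`,
i.e. `Φ_k(X) ∩ f_p = ⟨p_i : i ∈ F⟩`. -/
theorem statement10 {n : ℕ} (hn : 2 ≤ n) (r : Fin n → ℕ) (hr : ∀ i, 1 ≤ r i)
    (a : ∀ i : Fin n, ℂ → Fin (r i + 1) → ℂ)
    (hent : ∀ i j, Differentiable ℂ fun t => a i t j)
    (hnd : ∀ i t, (curveJet (r i) (a i) 1 t).rank = 2)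
    (t0 : ℂ) (k : ℕ) (hk : 2 ≤ k)
    (F : Finset (Fin n)) (hF : F.Nonempty) (hFproper : F ≠ Finset.univ)
    (h1 : ∀ i ∈ F, (curveJet (r i) (a i) k t0).rank ≤ k ∧
      (curveJet (r i) (a i) (k - 1) t0).rank = k)
    (h2 : ∀ i ∉ F, (curveJet (r i) (a i) k t0).rank = k + 1)
    (s : Fin n) (u : Fin n → ℂ) :
    (scrollJet r a k s t0 u).rank ≤ n * k ↔
      (s ∈ F ∧ ∀ i, i ≠ s → u i ≠ 0 → i ∈ F) := by
  classical
  open Submodule Module S10 in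
  -- the spans of the first `k` derivative rows of each curve
  have hk1 : 1 ≤ k := by omega
  have hRk : ∀ i : Fin n, finrank ℂ (Rsp (r i) (a i) t0 k) = k := by
    intro i
    by_cases hi : i ∈ F
    · exact finrank_Rsp_eq' (r i) (a i) t0 hk1 (h1 i hi).2
    · exact finrank_Rsp_eq (r i) (a i) t0 hk1 (h2 i hi)
  have hDkmem : ∀ i : Fin n, (D (r i) (a i) t0 k ∈ Rsp (r i) (a i) t0 k ↔ i ∈ F) := by
    intro i
    by_cases hi : i ∈ F
    · simp only [hi, iff_true]
      exact (mem_iff (r i) (a i) t0 (hRk i)).mpr (h1 i hi).1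
    · simp only [hi, iff_false]
      intro hmem
      have := (mem_iff (r i) (a i) t0 (hRk i)).mp hmem
      rw [h2 i hi] at this
      omega
  -- the scroll rows
  have hrow_top : ∀ l : Fin (k + 1), scrollJet r a k s t0 u (Sum.inl l) =
      inclL r s (D (r s) (a s) t0 l) +
        ∑ i ∈ Finset.univ.filter (fun i => i ≠ s),
          u i • inclL r i (D (r i) (a i) t0 l) := fun l => rfl
  have hrow_bot : ∀ q : {i : Fin n // i ≠ s} × Fin k,
      scrollJet r a k s t0 u (Sum.inr q) =
        inclL r q.1.1 (D (r q.1.1) (a q.1.1) t0 q.2) := fun q => rfl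
  -- projections of the top rows
  have hproj_top_s : ∀ l : Fin (k + 1),
      projL r s (scrollJet r a k s t0 u (Sum.inl l)) = D (r s) (a s) t0 l := by
    intro l
    rw [hrow_top, map_add, map_sum, proj_incl_same, Finset.sum_eq_zero, add_zero]
    intro i hi
    have hi' : (s : Fin n) ≠ i := fun h => (Finset.mem_filter.mp hi).2 h.symm
    rw [LinearMap.map_smul, proj_incl_ne r hi', smul_zero]
  have hproj_top_ne : ∀ (l : Fin (k + 1)) (j : Fin n), j ≠ s →
      projL r j (scrollJet r a k s t0 u (Sum.inl l)) = u j • D (r j) (a j) t0 l := by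
    intro l j hj
    rw [hrow_top, map_add, map_sum, proj_incl_ne r hj, zero_add]
    rw [Finset.sum_eq_single_of_mem j (by simp [hj])]
    · rw [LinearMap.map_smul, proj_incl_same]
    · intro i _ hij
      rw [LinearMap.map_smul, proj_incl_ne r (Ne.symm hij), smul_zero]
  -- projections of the bottom rows
  have hproj_bot_same : ∀ q : {i : Fin n // i ≠ s} × Fin k,
      projL r q.1.1 (scrollJet r a k s t0 u (Sum.inr q)) =
        D (r q.1.1) (a q.1.1) t0 q.2 := by
    intro q; rw [hrow_bot, proj_incl_same]
  have hproj_bot_ne : ∀ (q : {i : Fin n // i ≠ s} × Fin k) (j : Fin n), j ≠ q.1.1 →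
      projL r j (scrollJet r a k s t0 u (Sum.inr q)) = 0 := by
    intro q j hj; rw [hrow_bot, proj_incl_ne r hj]
  -- the distinguished vector and subspace
  set v : (Σ j : Fin n, Fin (r j + 1)) → ℂ :=
    scrollJet r a k s t0 u (Sum.inl (Fin.last k)) with hv_def
  set U : Submodule ℂ ((Σ j : Fin n, Fin (r j + 1)) → ℂ) :=
    ⨅ i : Fin n, (Rsp (r i) (a i) t0 k).comap (projL r i) with hU_def
  have hmemU : ∀ x, x ∈ U ↔ ∀ i, projL r i x ∈ Rsp (r i) (a i) t0 k := by
    intro x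
    simp only [hU_def, Submodule.mem_iInf, Submodule.mem_comap]
  -- U is contained in the row space
  have hUle : U ≤ rowSpace (scrollJet r a k s t0 u) := by
    intro x hx
    rw [← sum_incl_proj r x]
    refine Submodule.sum_mem _ fun i _ => ?_
    have hxi : projL r i x ∈ Rsp (r i) (a i) t0 k := (hmemU x).mp hx i
    have hmap : inclL r i (projL r i x) ∈
        Submodule.map (inclL r i) (Rsp (r i) (a i) t0 k) := ⟨_, hxi, rfl⟩
    rw [Rsp, Submodule.map_span] at hmap
    refine Submodule.span_le.mpr ?_ hmap
    rintro _ ⟨_, ⟨m, hm, rfl⟩, rfl⟩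
    simp only [Set.mem_Iio] at hm
    by_cases his : i = s
    · subst his
      have heq : scrollJet r a k i t0 u (Sum.inl (⟨m, by omega⟩ : Fin (k + 1))) =
          inclL r i (D (r i) (a i) t0 m) +
            ∑ j : {j : Fin n // j ≠ i},
              u j.1 • scrollJet r a k i t0 u (Sum.inr ⟨j, ⟨m, hm⟩⟩) := by
        rw [hrow_top]
        congr 1
        rw [Finset.sum_subtype (p := fun j => j ≠ i) _ (by simp)
          (fun j => u j • inclL r j (D (r j) (a j) t0 (⟨m, by omega⟩ : Fin (k + 1))))]
        refine Finset.sum_congr rfl fun j _ => ?_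
        rw [hrow_bot ⟨j, ⟨m, hm⟩⟩]
      have heq2 : inclL r i (D (r i) (a i) t0 m) =
          scrollJet r a k i t0 u (Sum.inl (⟨m, by omega⟩ : Fin (k + 1))) -
            ∑ j : {j : Fin n // j ≠ i},
              u j.1 • scrollJet r a k i t0 u (Sum.inr ⟨j, ⟨m, hm⟩⟩) := by
        rw [heq]; abel
      rw [heq2]
      refine sub_mem (Submodule.subset_span ⟨Sum.inl ⟨m, by omega⟩, rfl⟩)
        (Submodule.sum_mem _ fun j _ => Submodule.smul_mem _ _
          (Submodule.subset_span ⟨Sum.inr ⟨j, ⟨m, hm⟩⟩, rfl⟩))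
    · rw [show inclL r i (D (r i) (a i) t0 m) =
          scrollJet r a k s t0 u (Sum.inr ⟨⟨i, his⟩, ⟨m, hm⟩⟩) from
        (hrow_bot ⟨⟨i, his⟩, ⟨m, hm⟩⟩).symm]
      exact Submodule.subset_span ⟨Sum.inr ⟨⟨i, his⟩, ⟨m, hm⟩⟩, rfl⟩
  -- the row space is U plus the line spanned by v
  have hrowEq : rowSpace (scrollJet r a k s t0 u) = U ⊔ Submodule.span ℂ {v} := by
    refine le_antisymm ?_ (sup_le hUle (Submodule.span_le.mpr ?_))
    · rw [rowSpace]
      refine Submodule.span_le.mpr ?_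
      rintro _ ⟨row, rfl⟩
      rcases row with l | q
      · by_cases hl : (l : ℕ) = k
        · have : l = Fin.last k := Fin.ext (by simp [hl])
          rw [this]
          exact Submodule.mem_sup_right (Submodule.subset_span rfl)
        · have hlk : (l : ℕ) < k := lt_of_le_of_ne (Nat.lt_succ_iff.mp l.isLt) hl
          refine Submodule.mem_sup_left ((hmemU _).mpr fun j => ?_)
          by_cases hj : j = s
          · subst hj
            rw [hproj_top_s]
            exact mem_Rsp_of_lt hlk
          · rw [hproj_top_ne l j hj]
            exact Submodule.smul_mem _ _ (mem_Rsp_of_lt hlk)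
      · refine Submodule.mem_sup_left ((hmemU _).mpr fun j => ?_)
        by_cases hj : j = q.1.1
        · subst hj
          rw [hproj_bot_same]
          exact mem_Rsp_of_lt q.2.isLt
        · rw [hproj_bot_ne q j hj]
          exact Submodule.zero_mem _
    · rintro x rfl
      exact Submodule.subset_span ⟨Sum.inl (Fin.last k), rfl⟩
  -- the dimension of U
  have hUfin : finrank ℂ U = n * k := by
    set Ψ : (∀ i : Fin n, ↥(Rsp (r i) (a i) t0 k)) →ₗ[ℂ]
        ((Σ j : Fin n, Fin (r j + 1)) → ℂ) :=
      ∑ i : Fin n, (inclL r i).comp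
        ((Rsp (r i) (a i) t0 k).subtype.comp (LinearMap.proj i)) with hΨ_def
    have hΨ : ∀ y, Ψ y = ∑ i, inclL r i (y i) := by
      intro y
      simp [hΨ_def, LinearMap.sum_apply, LinearMap.comp_apply, LinearMap.proj_apply]
    have hprojΨ : ∀ y (j : Fin n), projL r j (Ψ y) = y j := by
      intro y j
      rw [hΨ, map_sum, Finset.sum_eq_single j]
      · rw [proj_incl_same]
      · intro i _ hij
        rw [proj_incl_ne r (Ne.symm hij)]
      · simp
    have hinj : Function.Injective Ψ := by
      intro y y' h
      funext i
      exact Subtype.ext (by rw [← hprojΨ y i, ← hprojΨ y' i, h])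
    have hrange : LinearMap.range Ψ = U := by
      refine le_antisymm ?_ ?_
      · rintro _ ⟨y, rfl⟩
        exact (hmemU _).mpr fun i => by rw [hprojΨ]; exact (y i).2
      · intro x hx
        exact ⟨fun i => ⟨projL r i x, (hmemU x).mp hx i⟩, by rw [hΨ]; exact sum_incl_proj r x⟩
    calc finrank ℂ U = finrank ℂ (LinearMap.range Ψ) := by rw [hrange]
      _ = finrank ℂ (∀ i : Fin n, ↥(Rsp (r i) (a i) t0 k)) :=
        LinearMap.finrank_range_of_inj hinj
      _ = ∑ i : Fin n, finrank ℂ ↥(Rsp (r i) (a i) t0 k) := Module.finrank_pi_fintype ℂ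
      _ = ∑ _i : Fin n, k := by simp only [hRk]
      _ = n * k := by simp [Finset.sum_const, mul_comm]
  -- membership of v in U
  have hlastk : ((Fin.last k : Fin (k + 1)) : ℕ) = k := rfl
  have hvU : v ∈ U ↔ (s ∈ F ∧ ∀ i, i ≠ s → u i ≠ 0 → i ∈ F) := by
    rw [hmemU]
    constructor
    · intro h
      constructor
      · have hs := h s
        rw [hv_def, hproj_top_s, hlastk] at hs
        exact (hDkmem s).mp hs
      · intro i his hui
        have hi := h i
        rw [hv_def, hproj_top_ne _ i his, hlastk] at hi
        have : D (r i) (a i) t0 k ∈ Rsp (r i) (a i) t0 k := by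
          have h' := (Rsp (r i) (a i) t0 k).smul_mem (u i)⁻¹ hi
          rwa [smul_smul, inv_mul_cancel₀ hui, one_smul] at h'
        exact (hDkmem i).mp this
    · rintro ⟨hs, hF'⟩ i
      by_cases his : i = s
      · subst his
        rw [hv_def, hproj_top_s, hlastk]
        exact (hDkmem i).mpr hs
      · rw [hv_def, hproj_top_ne _ i his, hlastk]
        by_cases hui : u i = 0
        · simp [hui]
        · exact Submodule.smul_mem _ _ ((hDkmem i).mpr (hF' i his hui))
  -- conclusion
  have hrankeq : (scrollJet r a k s t0 u).rank =
      finrank ℂ (rowSpace (scrollJet r a k s t0 u)) :=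
    Matrix.rank_eq_finrank_span_row _
  rw [hrankeq, hrowEq]
  by_cases hv : v ∈ U
  · have hsup : U ⊔ Submodule.span ℂ {v} = U :=
      sup_eq_left.mpr ((Submodule.span_singleton_le_iff_mem _ _).mpr hv)
    rw [hsup, hUfin]
    exact iff_of_true le_rfl (hvU.mp hv)
  · refine iff_of_false ?_ fun h => hv (hvU.mpr h)
    have hlt : U < U ⊔ Submodule.span ℂ {v} := by
      refine lt_of_le_of_ne le_sup_left fun he => hv ?_
      rw [he]
      exact Submodule.mem_sup_right (Submodule.subset_span rfl)
    have := Submodule.finrank_lt_finrank_of_lt hlt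
    rw [hUfin] at this
    omega
end

section
/- (Corollary 2.5.) Fix t_0 ∈ ℂ and an integer k ≥ 2. (i) If rank M^i_k(t_0) ≤ k for every i ∈ {1,…,n} (i.e. p_i ∈ Φ_k(C_i) for all i), then rank M^{X,s}_k(t_0, u) ≤ nk for every s ∈ {1,…,n} and all scalars u_i ∈ ℂ (i ≠ s) (i.e. the whole fibre over t_0 lies in Φ_k(X)). (ii) Conversely, if rank M^{X,s}_k(t_0, u) ≤ nk for every s and all u (i.e. the whole fibre over t_0 lies in Φ_k(X)), then rank M^i_k(t_0) ≤ k for some i (i.e. p_i ∈ Φ_k(C_i) for some i). -/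
open Matrix

/-- The block inclusion as a linear map. -/
noncomputable def blockLM {n : ℕ} (r : Fin n → ℕ) (i : Fin n) :
    (Fin (r i + 1) → ℂ) →ₗ[ℂ] ((Σ j : Fin n, Fin (r j + 1)) → ℂ) where
  toFun := blockIncl r i
  map_add' v w := by
    funext p; simp only [blockIncl, Pi.add_apply]; split <;> simp
  map_smul' c v := by
    funext p; simp only [blockIncl, Pi.smul_apply, RingHom.id_apply]; split <;> simp

lemma blockIncl_apply_same {n : ℕ} (r : Fin n → ℕ) (i : Fin n)
    (v : Fin (r i + 1) → ℂ) (j : Fin (r i + 1)) :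
    blockIncl r i v ⟨i, j⟩ = v j := by
  simp [blockIncl]

lemma blockIncl_apply_ne {n : ℕ} (r : Fin n → ℕ) (i i' : Fin n) (h : i' ≠ i)
    (v : Fin (r i + 1) → ℂ) (j : Fin (r i' + 1)) :
    blockIncl r i v ⟨i', j⟩ = 0 := by
  simp [blockIncl, h]

lemma finrank_finsetSup_le {V : Type*} [AddCommGroup V] [Module ℂ V]
    [FiniteDimensional ℂ V] {ι : Type*} (s : Finset ι) (W : ι → Submodule ℂ V) :
    Module.finrank ℂ ↥(s.sup W) ≤ ∑ i ∈ s, Module.finrank ℂ ↥(W i) := by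
  classical
  induction s using Finset.cons_induction with
  | empty => simp
  | cons a s ha ih =>
      rw [Finset.sup_cons, Finset.sum_cons]
      exact (Submodule.finrank_add_le_finrank_add_finrank _ _).trans
        (Nat.add_le_add_left ih _)

/-- Part (i) as a standalone lemma. -/
lemma scroll_rank_le {n : ℕ} (r : Fin n → ℕ)
    (a : ∀ i : Fin n, ℂ → Fin (r i + 1) → ℂ)
    (t0 : ℂ) (k : ℕ)
    (h : ∀ i, (curveJet (r i) (a i) k t0).rank ≤ k)
    (s : Fin n) (u : Fin n → ℂ) : (scrollJet r a k s t0 u).rank ≤ n * k := by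
  classical
  set W : Fin n → Submodule ℂ ((Σ j : Fin n, Fin (r j + 1)) → ℂ) :=
    fun i => (Submodule.span ℂ (Set.range (curveJet (r i) (a i) k t0))).map (blockLM r i)
    with hW
  have hmem : ∀ i (l : Fin (k + 1)),
      blockIncl r i (curveJet (r i) (a i) k t0 l) ∈ Finset.univ.sup W := by
    intro i l
    have h1 : curveJet (r i) (a i) k t0 l ∈
        Submodule.span ℂ (Set.range (curveJet (r i) (a i) k t0)) :=
      Submodule.subset_span ⟨l, rfl⟩
    have h2 : blockIncl r i (curveJet (r i) (a i) k t0 l) ∈ W i :=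
      Submodule.mem_map_of_mem h1
    exact SetLike.le_def.mp (Finset.le_sup (Finset.mem_univ i)) h2
  have hrow : ∀ x, scrollJet r a k s t0 u x ∈ Finset.univ.sup W := by
    rintro (l | q)
    · refine Submodule.add_mem _ (hmem s l) (Submodule.sum_mem _ fun i _ => ?_)
      exact Submodule.smul_mem _ _ (hmem i l)
    · exact hmem q.1.1 q.2.castSucc
  rw [Matrix.rank_eq_finrank_span_row]
  calc Module.finrank ℂ ↥(Submodule.span ℂ (Set.range (scrollJet r a k s t0 u)))
      ≤ Module.finrank ℂ ↥(Finset.univ.sup W) := by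
        apply Submodule.finrank_mono
        rw [Submodule.span_le]
        rintro _ ⟨x, rfl⟩
        exact hrow x
    _ ≤ ∑ i : Fin n, Module.finrank ℂ ↥(W i) := finrank_finsetSup_le _ _
    _ ≤ ∑ _i : Fin n, k := by
        refine Finset.sum_le_sum fun i _ => ?_
        refine le_trans (Submodule.finrank_map_le _ _) ?_
        have h' := h i
        rw [Matrix.rank_eq_finrank_span_row] at h'
        exact h'
    _ = n * k := by simp [Finset.sum_const, mul_comm]

/-- Part (ii) as a standalone lemma. -/
lemma scroll_rank_converse {n : ℕ} (hn : 2 ≤ n) (r : Fin n → ℕ)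
    (a : ∀ i : Fin n, ℂ → Fin (r i + 1) → ℂ)
    (t0 : ℂ) (k : ℕ)
    (h : ∀ (s : Fin n) (u : Fin n → ℂ), (scrollJet r a k s t0 u).rank ≤ n * k) :
    ∃ i, (curveJet (r i) (a i) k t0).rank ≤ k := by
  classical
  by_contra hc
  push_neg at hc
  -- each curve jet has linearly independent rows
  have hli : ∀ i, LinearIndependent ℂ (curveJet (r i) (a i) k t0) := by
    intro i
    refine linearIndependent_iff_card_eq_finrank_span.mpr ?_
    have h1 := (curveJet (r i) (a i) k t0).rank_le_card_height
    have h2 := hc i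
    have h3 : (curveJet (r i) (a i) k t0).rank = Module.finrank ℂ (Submodule.span ℂ
        (Set.range (curveJet (r i) (a i) k t0 : Fin (k + 1) → Fin (r i + 1) → ℂ))) :=
      (curveJet (r i) (a i) k t0).rank_eq_finrank_span_row
    rw [Set.finrank, ← h3]
    simp only [Fintype.card_fin] at h1 ⊢
    omega
  have hnpos : 0 < n := by omega
  set s : Fin n := ⟨0, hnpos⟩ with hs
  set M := scrollJet r a k s t0 0 with hM
  have hrow_inl : ∀ l, M (Sum.inl l) = blockIncl r s (curveJet (r s) (a s) k t0 l) := by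
    intro l
    have : M (Sum.inl l) = blockIncl r s (curveJet (r s) (a s) k t0 l) +
        ∑ i ∈ Finset.univ.filter (fun i => i ≠ s),
          (0 : Fin n → ℂ) i • blockIncl r i (curveJet (r i) (a i) k t0 l) := rfl
    rw [this]
    simp
  have hrow_inr : ∀ q, M (Sum.inr q) =
      blockIncl r q.1.1 (curveJet (r q.1.1) (a q.1.1) k t0 q.2.castSucc) := by
    intro q; rfl
  have hMli : LinearIndependent ℂ M := by
    refine Fintype.linearIndependent_iff.mpr ?_
    intro g hg
    have hgp : ∀ (i : Fin n) (j : Fin (r i + 1)),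
        ∑ x, g x • M x ⟨i, j⟩ = 0 := by
      intro i j
      calc ∑ x, g x • M x ⟨i, j⟩ = (∑ x, g x • M x) ⟨i, j⟩ := by
            rw [Finset.sum_apply]; simp
        _ = 0 := by rw [hg]; rfl
    -- inl coefficients vanish
    have hinl : ∀ l, g (Sum.inl l) = 0 := by
      have key : ∑ l, g (Sum.inl l) • curveJet (r s) (a s) k t0 l = 0 := by
        funext j
        have := hgp s j
        rw [Fintype.sum_sum_type] at this
        simp only [hrow_inl, hrow_inr, blockIncl_apply_same] at this
        rw [Finset.sum_apply]
        simp only [Pi.smul_apply, smul_eq_mul]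
        have hz : ∀ q : {i : Fin n // i ≠ s} × Fin k,
            g (Sum.inr q) • blockIncl r q.1.1
              (curveJet (r q.1.1) (a q.1.1) k t0 q.2.castSucc) ⟨s, j⟩ = 0 := by
          intro q
          rw [blockIncl_apply_ne r q.1.1 s (Ne.symm q.1.2)]
          simp
        rw [Finset.sum_congr rfl (fun q _ => hz q), Finset.sum_const, smul_zero,
          add_zero] at this
        simpa using this
      exact fun l => Fintype.linearIndependent_iff.mp (hli s) _ key l
    -- inr coefficients vanish
    have hinr : ∀ q, g (Sum.inr q) = 0 := by
      rintro ⟨⟨i, hi⟩, m⟩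
      have hli' : LinearIndependent ℂ
          (fun m : Fin k => curveJet (r i) (a i) k t0 m.castSucc) :=
        (hli i).comp Fin.castSucc (Fin.castSucc_injective k)
      have key : ∑ m : Fin k, g (Sum.inr (⟨⟨i, hi⟩, m⟩)) •
          curveJet (r i) (a i) k t0 m.castSucc = 0 := by
        funext j
        have := hgp i j
        rw [Fintype.sum_sum_type] at this
        simp only [hrow_inl, hrow_inr] at this
        have hz1 : ∀ l : Fin (k + 1),
            g (Sum.inl l) • blockIncl r s (curveJet (r s) (a s) k t0 l) ⟨i, j⟩ = 0 := by
          intro l; rw [hinl]; simp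
        rw [Finset.sum_congr rfl (fun l _ => hz1 l), Finset.sum_const, smul_zero,
          zero_add, Fintype.sum_prod_type] at this
        rw [Finset.sum_eq_single (⟨i, hi⟩ : {i : Fin n // i ≠ s})] at this
        · rw [Finset.sum_apply]
          simp only [Pi.smul_apply, smul_eq_mul]
          simpa [blockIncl_apply_same] using this
        · intro p _ hp
          apply Finset.sum_eq_zero
          intro m' _
          have : i ≠ p.1 := by
            intro hip
            exact hp (Subtype.ext hip.symm)
          have hz := blockIncl_apply_ne r p.1 i this
            (curveJet (r p.1) (a p.1) k t0 m'.castSucc) j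
          simp only [hz, smul_zero]
        · intro habs
          exact absurd (Finset.mem_univ _) habs
      exact Fintype.linearIndependent_iff.mp hli' _ key m
    rintro (l | q)
    · exact hinl l
    · exact hinr q
  have hcard : (scrollJet r a k s t0 0).rank =
      Fintype.card (Fin (k + 1) ⊕ ({i : Fin n // i ≠ s} × Fin k)) :=
    hMli.rank_matrix
  have hc2 : Fintype.card {i : Fin n // i ≠ s} = n - 1 := by
    rw [Fintype.card_subtype_compl]
    simp
  have hle := h s 0
  rw [hcard] at hle
  simp only [Fintype.card_sum, Fintype.card_fin, Fintype.card_prod, hc2] at hle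
  obtain ⟨m, rfl⟩ : ∃ m, n = m + 2 := ⟨n - 2, by omega⟩
  have : k + 1 + (m + 2 - 1) * k = (m + 2) * k + 1 := by
    have : m + 2 - 1 = m + 1 := rfl
    rw [this]; ring
  omega

/-- Corollary 2.5: (i) if `p_i ∈ Φ_k(C_i)` for every `i`, then the
whole fibre over `t0` lies in `Φ_k(X)`; (ii) conversely, if the whole fibre over
`t0` lies in `Φ_k(X)`, then `p_i ∈ Φ_k(C_i)` for some `i`. -/
theorem statement11 {n : ℕ} (hn : 2 ≤ n) (r : Fin n → ℕ) (hr : ∀ i, 1 ≤ r i)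
    (a : ∀ i : Fin n, ℂ → Fin (r i + 1) → ℂ)
    (hent : ∀ i j, Differentiable ℂ fun t => a i t j)
    (hnd : ∀ i t, (curveJet (r i) (a i) 1 t).rank = 2)
    (t0 : ℂ) (k : ℕ) (hk : 2 ≤ k) :
    ((∀ i, (curveJet (r i) (a i) k t0).rank ≤ k) →
      ∀ (s : Fin n) (u : Fin n → ℂ), (scrollJet r a k s t0 u).rank ≤ n * k) ∧
    ((∀ (s : Fin n) (u : Fin n → ℂ), (scrollJet r a k s t0 u).rank ≤ n * k) →
      ∃ i, (curveJet (r i) (a i) k t0).rank ≤ k) := by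
  exact ⟨fun h => scroll_rank_le r a t0 k h,
    fun h => scroll_rank_converse hn r a t0 k h⟩
end

section
/- (Proposition 2.6.) Let n = 2. Fix t_0 ∈ ℂ and an integer k ≥ 2. Then the whole fibre over t_0 lies in Φ_k(X) — i.e. rank M^{X,s}_k(t_0, u) ≤ 2k for every s ∈ {1,2} and every u ∈ ℂ — if and only if either (a) rank M^i_{k-1}(t_0) ≤ k−1 for some i ∈ {1,2} (i.e. p_i ∈ Φ_{k−1}(C_i) for some i), or (b) rank M^i_k(t_0) ≤ k for both i = 1 and i = 2 (i.e. p_i ∈ Φ_k(C_i) for i = 1, 2). -/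
open Matrix

namespace ScrollAux

/-- The block inclusion as a linear map. -/
noncomputable def inclL {n : ℕ} (r : Fin n → ℕ) (i : Fin n) :
    (Fin (r i + 1) → ℂ) →ₗ[ℂ] ((Σ j : Fin n, Fin (r j + 1)) → ℂ) where
  toFun := blockIncl r i
  map_add' v w := by
    funext p
    by_cases h : p.1 = i <;> simp [blockIncl, h]
  map_smul' c v := by
    funext p
    by_cases h : p.1 = i <;> simp [blockIncl, h]

lemma inclL_apply {n : ℕ} (r : Fin n → ℕ) (i : Fin n) (v : Fin (r i + 1) → ℂ) :
    inclL r i v = blockIncl r i v := rfl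

lemma inclL_inj {n : ℕ} (r : Fin n → ℕ) (i : Fin n) : Function.Injective (inclL r i) := by
  intro v w h
  funext j
  have h2 := congrFun h ⟨i, j⟩
  simpa [inclL, blockIncl] using h2

lemma map_inf_map {n : ℕ} (r : Fin n → ℕ) {i i' : Fin n} (h : i ≠ i')
    (A : Submodule ℂ (Fin (r i + 1) → ℂ)) (B : Submodule ℂ (Fin (r i' + 1) → ℂ)) :
    (A.map (inclL r i)) ⊓ (B.map (inclL r i')) = ⊥ := by
  rw [eq_bot_iff]
  rintro x ⟨⟨v, -, rfl⟩, ⟨w, -, hw⟩⟩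
  have : inclL r i v = 0 := by
    funext p
    by_cases hp : p.1 = i
    · have h2 := congrFun hw p
      simp only [inclL, LinearMap.coe_mk, AddHom.coe_mk, blockIncl] at h2 ⊢
      rw [dif_neg (by rw [hp]; exact h)] at h2
      rw [← h2]
      rfl
    · simp only [inclL, LinearMap.coe_mk, AddHom.coe_mk, blockIncl]
      rw [dif_neg hp]
      rfl
  simp [this]

lemma finrank_map_inclL {n : ℕ} (r : Fin n → ℕ) (i : Fin n)
    (A : Submodule ℂ (Fin (r i + 1) → ℂ)) :
    Module.finrank ℂ (A.map (inclL r i)) = Module.finrank ℂ A :=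
  (LinearEquiv.finrank_eq (Submodule.equivMapOfInjective (inclL r i) (inclL_inj r i) A)).symm

lemma finrank_map_sup {n : ℕ} (r : Fin n → ℕ) {i i' : Fin n} (h : i ≠ i')
    (A : Submodule ℂ (Fin (r i + 1) → ℂ)) (B : Submodule ℂ (Fin (r i' + 1) → ℂ)) :
    Module.finrank ℂ ((A.map (inclL r i)) ⊔ (B.map (inclL r i')) : Submodule ℂ _) =
      Module.finrank ℂ A + Module.finrank ℂ B := by
  have key := Submodule.finrank_sup_add_finrank_inf_eq (A.map (inclL r i)) (B.map (inclL r i'))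
  rw [map_inf_map r h A B, finrank_bot, add_zero, finrank_map_inclL, finrank_map_inclL] at key
  exact key

def other (s : Fin 2) : Fin 2 := ⟨1 - s.val, by omega⟩

lemma other_ne (s : Fin 2) : other s ≠ s := by fin_cases s <;> decide

lemma eq_other {i s : Fin 2} (h : i ≠ s) : i = other s := by
  fin_cases s <;> fin_cases i <;> first | rfl | simp_all

lemma filter_ne (s : Fin 2) :
    Finset.univ.filter (fun i => i ≠ s) = ({other s} : Finset (Fin 2)) := by
  fin_cases s <;> decide

end ScrollAux

namespace ScrollAux

lemma jetrow (r : ℕ) (a : ℂ → Fin (r + 1) → ℂ) (k k' : ℕ) (t : ℂ)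
    (l : Fin (k + 1)) (l' : Fin (k' + 1)) (h : (l : ℕ) = (l' : ℕ)) :
    curveJet r a k t l = curveJet r a k' t l' := by
  funext j
  simp only [curveJet, Matrix.of_apply]
  rw [h]

variable (r : Fin 2 → ℕ) (a : ∀ i : Fin 2, ℂ → Fin (r i + 1) → ℂ) (k : ℕ) (t0 : ℂ)

lemma scroll_row_inl (s : Fin 2) (u : Fin 2 → ℂ) (l : Fin (k + 1)) :
    scrollJet r a k s t0 u (Sum.inl l) =
      blockIncl r s (curveJet (r s) (a s) k t0 l) +
        u (ScrollAux.other s) •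
          blockIncl r (ScrollAux.other s)
            (curveJet (r (ScrollAux.other s)) (a (ScrollAux.other s)) k t0 l) := by
  simp only [scrollJet, ScrollAux.filter_ne, Finset.sum_singleton, Matrix.of_apply]
  rfl

lemma scroll_row_inr (s : Fin 2) (u : Fin 2 → ℂ) (i : Fin 2) (hi : i ≠ s) (m : Fin k) :
    scrollJet r a k s t0 u (Sum.inr ⟨⟨i, hi⟩, m⟩) =
      blockIncl r i (curveJet (r i) (a i) k t0 m.castSucc) := rfl

lemma rank_le_of_rows_mem {m α : Type*} [Fintype m] [Fintype α] (M : Matrix m α ℂ)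
    (Q : Submodule ℂ (α → ℂ)) (h : ∀ i, M i ∈ Q) : M.rank ≤ Module.finrank ℂ Q := by
  rw [Matrix.rank_eq_finrank_span_row]
  exact Submodule.finrank_mono (Submodule.span_le.mpr (Set.range_subset_iff.mpr h))

end ScrollAux

namespace ScrollAux

variable (r : Fin 2 → ℕ) (a : ∀ i : Fin 2, ℂ → Fin (r i + 1) → ℂ) (k : ℕ) (t0 : ℂ)

lemma span_u0 (hk : 2 ≤ k) (s : Fin 2) :
    Submodule.span ℂ (Set.range (scrollJet r a k s t0 0)) =
      (Submodule.span ℂ (Set.range (curveJet (r s) (a s) k t0))).map (inclL r s) ⊔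
      (Submodule.span ℂ
        (Set.range (curveJet (r (other s)) (a (other s)) (k - 1) t0))).map
          (inclL r (other s)) := by
  apply le_antisymm
  · rw [Submodule.span_le]
    rintro x ⟨row, rfl⟩
    rcases row with l | ⟨⟨i, hi⟩, m⟩
    · rw [scroll_row_inl]
      simp only [Pi.zero_apply, zero_smul, add_zero]
      exact Submodule.mem_sup_left
        (Submodule.mem_map_of_mem (Submodule.subset_span (Set.mem_range_self l)))
    · obtain rfl : i = other s := eq_other hi
      rw [scroll_row_inr]
      have hm := m.isLt
      have hcast : curveJet (r (other s)) (a (other s)) k t0 m.castSucc =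
          curveJet (r (other s)) (a (other s)) (k - 1) t0 ⟨m.val, by omega⟩ :=
        jetrow _ _ _ _ _ _ _ (by simp)
      rw [hcast]
      exact Submodule.mem_sup_right
        (Submodule.mem_map_of_mem (Submodule.subset_span (Set.mem_range_self _)))
  · apply sup_le
    · rw [Submodule.map_span, Submodule.span_le]
      rintro x ⟨v, ⟨l, rfl⟩, rfl⟩
      have h1 : inclL r s (curveJet (r s) (a s) k t0 l) =
          scrollJet r a k s t0 0 (Sum.inl l) := by
        rw [scroll_row_inl]; simp [inclL_apply]
      rw [h1]
      exact Submodule.subset_span (Set.mem_range_self _)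
    · rw [Submodule.map_span, Submodule.span_le]
      rintro x ⟨v, ⟨m, rfl⟩, rfl⟩
      have hm' := m.isLt
      have hm : (m : ℕ) < k := by omega
      have h1 : inclL r (other s) (curveJet (r (other s)) (a (other s)) (k - 1) t0 m) =
          scrollJet r a k s t0 0 (Sum.inr ⟨⟨other s, other_ne s⟩, ⟨(m : ℕ), hm⟩⟩) := by
        rw [scroll_row_inr, inclL_apply]
        congr 1
      rw [h1]
      exact Submodule.subset_span (Set.mem_range_self _)

lemma rank_eq_finrank_span_row' {m α : Type*} [Fintype m] [Fintype α] (A : Matrix m α ℂ) :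
    A.rank = Module.finrank ℂ (Submodule.span ℂ (Set.range A)) :=
  Matrix.rank_eq_finrank_span_row A

lemma rank_u0 (hk : 2 ≤ k) (s : Fin 2) :
    (scrollJet r a k s t0 0).rank =
      (curveJet (r s) (a s) k t0).rank +
        (curveJet (r (other s)) (a (other s)) (k - 1) t0).rank := by
  rw [rank_eq_finrank_span_row', rank_eq_finrank_span_row',
    rank_eq_finrank_span_row', span_u0 r a k t0 hk s,
    finrank_map_sup r (Ne.symm (other_ne s))]

lemma rank_le_b (s : Fin 2) (u : Fin 2 → ℂ) :
    (scrollJet r a k s t0 u).rank ≤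
      (curveJet (r s) (a s) k t0).rank +
        (curveJet (r (other s)) (a (other s)) k t0).rank := by
  have hmem : ∀ row, scrollJet r a k s t0 u row ∈
      (Submodule.span ℂ (Set.range (curveJet (r s) (a s) k t0))).map (inclL r s) ⊔
      (Submodule.span ℂ (Set.range (curveJet (r (other s)) (a (other s)) k t0))).map
        (inclL r (other s)) := by
    rintro (l | ⟨⟨i, hi⟩, m⟩)
    · rw [scroll_row_inl]
      exact Submodule.add_mem _
        (Submodule.mem_sup_left
          (Submodule.mem_map_of_mem (Submodule.subset_span (Set.mem_range_self _))))
        (Submodule.smul_mem _ _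
          (Submodule.mem_sup_right
            (Submodule.mem_map_of_mem (Submodule.subset_span (Set.mem_range_self _)))))
    · obtain rfl : i = other s := eq_other hi
      rw [scroll_row_inr]
      exact Submodule.mem_sup_right
        (Submodule.mem_map_of_mem (Submodule.subset_span (Set.mem_range_self _)))
  refine (rank_le_of_rows_mem _ _ hmem).trans ?_
  rw [finrank_map_sup r (Ne.symm (other_ne s)), ← rank_eq_finrank_span_row',
    ← rank_eq_finrank_span_row']

lemma rank_le_a (hk : 2 ≤ k) (s : Fin 2) (u : Fin 2 → ℂ) :
    (scrollJet r a k s t0 u).rank ≤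
      (curveJet (r s) (a s) (k - 1) t0).rank +
        (curveJet (r (other s)) (a (other s)) (k - 1) t0).rank + 1 := by
  have hmem : ∀ row, scrollJet r a k s t0 u row ∈
      ((Submodule.span ℂ (Set.range (curveJet (r s) (a s) (k - 1) t0))).map (inclL r s) ⊔
       (Submodule.span ℂ
          (Set.range (curveJet (r (other s)) (a (other s)) (k - 1) t0))).map
            (inclL r (other s))) ⊔
      Submodule.span ℂ {scrollJet r a k s t0 u (Sum.inl (Fin.last k))} := by
    rintro (l | ⟨⟨i, hi⟩, m⟩)
    · by_cases hl : (l : ℕ) < k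
      · apply Submodule.mem_sup_left
        rw [scroll_row_inl]
        have e1 : curveJet (r s) (a s) k t0 l =
            curveJet (r s) (a s) (k - 1) t0 ⟨(l : ℕ), by omega⟩ :=
          jetrow _ _ _ _ _ _ _ rfl
        have e2 : curveJet (r (other s)) (a (other s)) k t0 l =
            curveJet (r (other s)) (a (other s)) (k - 1) t0 ⟨(l : ℕ), by omega⟩ :=
          jetrow _ _ _ _ _ _ _ rfl
        rw [e1, e2]
        exact Submodule.add_mem _
          (Submodule.mem_sup_left
            (Submodule.mem_map_of_mem (Submodule.subset_span (Set.mem_range_self _))))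
          (Submodule.smul_mem _ _
            (Submodule.mem_sup_right
              (Submodule.mem_map_of_mem (Submodule.subset_span (Set.mem_range_self _)))))
      · have hlast : l = Fin.last k := by
          have := l.isLt
          apply Fin.ext
          simp only [Fin.val_last]
          omega
        subst hlast
        exact Submodule.mem_sup_right (Submodule.mem_span_singleton_self _)
    · obtain rfl : i = other s := eq_other hi
      apply Submodule.mem_sup_left
      rw [scroll_row_inr]
      have hm := m.isLt
      have e : curveJet (r (other s)) (a (other s)) k t0 m.castSucc =
          curveJet (r (other s)) (a (other s)) (k - 1) t0 ⟨(m : ℕ), by omega⟩ :=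
        jetrow _ _ _ _ _ _ _ (by simp)
      rw [e]
      exact Submodule.mem_sup_right
        (Submodule.mem_map_of_mem (Submodule.subset_span (Set.mem_range_self _)))
  refine (rank_le_of_rows_mem _ _ hmem).trans ?_
  refine (Submodule.finrank_add_le_finrank_add_finrank _ _).trans ?_
  have h1 : Module.finrank ℂ
      ((Submodule.span ℂ (Set.range (curveJet (r s) (a s) (k - 1) t0))).map (inclL r s) ⊔
       (Submodule.span ℂ
          (Set.range (curveJet (r (other s)) (a (other s)) (k - 1) t0))).map
            (inclL r (other s)) : Submodule ℂ _) =
      (curveJet (r s) (a s) (k - 1) t0).rank +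
        (curveJet (r (other s)) (a (other s)) (k - 1) t0).rank := by
    rw [finrank_map_sup r (Ne.symm (other_ne s)), ← rank_eq_finrank_span_row',
      ← rank_eq_finrank_span_row']
  have h2 : Module.finrank ℂ
      (Submodule.span ℂ ({scrollJet r a k s t0 u (Sum.inl (Fin.last k))} :
        Set ((j : Fin 2) × Fin (r j + 1) → ℂ))) ≤ 1 := by
    rcases eq_or_ne (scrollJet r a k s t0 u (Sum.inl (Fin.last k))) 0 with h | h
    · rw [h, Submodule.span_zero_singleton]
      simp
    · exact le_of_eq (finrank_span_singleton h)
  omega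

end ScrollAux


/-- Proposition 2.6: for a decomposable surface scroll (`n = 2`),
the whole fibre over `t0` lies in `Φ_k(X)` iff either (a) `p_i ∈ Φ_{k-1}(C_i)` for
some `i`, or (b) `p_i ∈ Φ_k(C_i)` for both `i = 1, 2`. -/
theorem statement12 (r : Fin 2 → ℕ) (hr : ∀ i, 1 ≤ r i)
    (a : ∀ i : Fin 2, ℂ → Fin (r i + 1) → ℂ)
    (hent : ∀ i j, Differentiable ℂ fun t => a i t j)
    (hnd : ∀ i t, (curveJet (r i) (a i) 1 t).rank = 2)
    (t0 : ℂ) (k : ℕ) (hk : 2 ≤ k) :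
    (∀ (s : Fin 2) (u : Fin 2 → ℂ), (scrollJet r a k s t0 u).rank ≤ 2 * k) ↔
      ((∃ i, (curveJet (r i) (a i) (k - 1) t0).rank ≤ k - 1) ∨
        (∀ i, (curveJet (r i) (a i) k t0).rank ≤ k)) := by
  constructor
  · intro h
    by_cases hc : ∃ i, (curveJet (r i) (a i) (k - 1) t0).rank ≤ k - 1
    · exact Or.inl hc
    · push_neg at hc
      refine Or.inr fun i => ?_
      have h0 := h i 0
      rw [ScrollAux.rank_u0 r a k t0 hk i] at h0
      have hb := hc (ScrollAux.other i)
      omega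
  · rintro (⟨i0, hi0⟩ | hb) s u
    · have hle := ScrollAux.rank_le_a r a k t0 hk s u
      have hA := Matrix.rank_le_card_height (curveJet (r s) (a s) (k - 1) t0)
      have hB := Matrix.rank_le_card_height
        (curveJet (r (ScrollAux.other s)) (a (ScrollAux.other s)) (k - 1) t0)
      rw [Fintype.card_fin] at hA hB
      by_cases his : i0 = s
      · subst his; omega
      · have hio : i0 = ScrollAux.other s := ScrollAux.eq_other his
        rw [hio] at hi0
        omega
    · have hle := ScrollAux.rank_le_b r a k t0 s u
      have h1 := hb s
      have h2 := hb (ScrollAux.other s)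
      omega
end

section
/- (Theorem 2.7.) Let n = 2. Fix t_0 ∈ ℂ and an integer k ≥ 2, and suppose some point x of the fibre over t_0 lies in Φ_k(X), i.e. rank M^{X,s}_k(t_0, u) ≤ 2k for some s ∈ {1,2} and u ∈ ℂ. Then: (i) if u ≠ 0 (i.e. x is distinct from both points p_1 and p_2), the whole fibre over t_0 lies in Φ_k(X): rank M^{X,σ}_k(t_0, w) ≤ 2k for every σ ∈ {1,2} and every w ∈ ℂ; (ii) if u = 0 (i.e. x = p_s), then either the whole fibre over t_0 lies in Φ_k(X) (in the same sense), or rank M^s_k(t_0) ≤ k (i.e. p_s ∈ Φ_k(C_s)). -/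
open Matrix

namespace Statement13Aux

lemma fin2_eq_add_one : ∀ s i : Fin 2, i ≠ s → i = s + 1 := by decide
lemma fin2_add_one_ne : ∀ s : Fin 2, s + 1 ≠ s := by decide
lemma fin2_cases : ∀ σ s : Fin 2, σ = s ∨ σ = s + 1 := by decide
lemma fin2_add_add : ∀ s : Fin 2, s + 1 + 1 = s := by decide

lemma filter_ne (s : Fin 2) :
    (Finset.univ.filter (fun i : Fin 2 => i ≠ s)) = {s + 1} := by
  ext i
  simp only [Finset.mem_filter, Finset.mem_univ, true_and, Finset.mem_singleton]
  exact ⟨fun h => fin2_eq_add_one s i h, fun h => h ▸ fin2_add_one_ne s⟩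

variable (r : Fin 2 → ℕ) (a : ∀ i : Fin 2, ℂ → Fin (r i + 1) → ℂ) (t0 : ℂ)

/-- The block-included `m`-th derivative row of the `i`-th curve. -/
noncomputable def grow (i : Fin 2) (m : ℕ) : (Σ j : Fin 2, Fin (r j + 1)) → ℂ :=
  blockIncl r i (fun j => iteratedDeriv m (fun t => a i t j) t0)

noncomputable def Asp (i : Fin 2) (k : ℕ) :
    Submodule ℂ ((Σ j : Fin 2, Fin (r j + 1)) → ℂ) :=
  Submodule.span ℂ (Set.range fun l : Fin k => grow r a t0 i l)

instance (i : Fin 2) (k : ℕ) : FiniteDimensional ℂ (Asp r a t0 i k) :=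
  Module.Finite.span_of_finite ℂ (Set.finite_range _)

lemma scroll_row_inl (k : ℕ) (s : Fin 2) (u : Fin 2 → ℂ) (l : Fin (k + 1)) :
    scrollJet r a k s t0 u (Sum.inl l)
      = grow r a t0 s l + u (s + 1) • grow r a t0 (s + 1) l := by
  show blockIncl r s _ + _ = _
  rw [filter_ne, Finset.sum_singleton]
  rfl

lemma scroll_row_inr (k : ℕ) (s : Fin 2) (u : Fin 2 → ℂ)
    (q : {i : Fin 2 // i ≠ s} × Fin k) :
    scrollJet r a k s t0 u (Sum.inr q) = grow r a t0 (s + 1) q.2 := by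
  have h : q.1.1 = s + 1 := fin2_eq_add_one s q.1.1 q.1.2
  have e : scrollJet r a k s t0 u (Sum.inr q) = grow r a t0 q.1.1 q.2 := rfl
  rw [e, h]


lemma rowSpace_scrollJet (k : ℕ) (s : Fin 2) (u : Fin 2 → ℂ) :
    rowSpace (scrollJet r a k s t0 u)
      = (Asp r a t0 s k ⊔ Asp r a t0 (s + 1) k) ⊔
        Submodule.span ℂ {grow r a t0 s k + u (s + 1) • grow r a t0 (s + 1) k} := by
  apply le_antisymm
  · rw [rowSpace, Submodule.span_le]
    rintro x ⟨row, rfl⟩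
    match row with
    | Sum.inl l =>
      show scrollJet r a k s t0 u (Sum.inl l) ∈ _
      rw [scroll_row_inl]
      rcases lt_or_eq_of_le (Nat.lt_succ_iff.mp l.isLt) with hl | hl
      · refine Submodule.add_mem _ ?_ (Submodule.smul_mem _ _ ?_)
        · exact Submodule.mem_sup_left
            (Submodule.mem_sup_left (Submodule.subset_span ⟨⟨l, hl⟩, rfl⟩))
        · exact Submodule.mem_sup_left
            (Submodule.mem_sup_right (Submodule.subset_span ⟨⟨l, hl⟩, rfl⟩))
      · rw [hl]
        exact Submodule.mem_sup_right (Submodule.subset_span rfl)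
    | Sum.inr q =>
      show scrollJet r a k s t0 u (Sum.inr q) ∈ _
      rw [scroll_row_inr]
      exact Submodule.mem_sup_left
        (Submodule.mem_sup_right (Submodule.subset_span ⟨q.2, rfl⟩))
  · have hrow : ∀ i, scrollJet r a k s t0 u i ∈ rowSpace (scrollJet r a k s t0 u) :=
      fun i => Submodule.subset_span ⟨i, rfl⟩
    refine sup_le (sup_le ?_ ?_) ?_
    · rw [Asp, Submodule.span_le]
      rintro x ⟨l, rfl⟩
      have e1 := scroll_row_inl r a t0 k s u l.castSucc
      rw [Fin.coe_castSucc] at e1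
      have e2 : scrollJet r a k s t0 u (Sum.inr ⟨⟨s + 1, fin2_add_one_ne s⟩, l⟩)
          = grow r a t0 (s + 1) (l : ℕ) := scroll_row_inr r a t0 k s u _
      show grow r a t0 s (l : ℕ) ∈ _
      have key : grow r a t0 s l
          = scrollJet r a k s t0 u (Sum.inl l.castSucc)
            - u (s + 1) • scrollJet r a k s t0 u (Sum.inr ⟨⟨s + 1, fin2_add_one_ne s⟩, l⟩) := by
        rw [e1, e2]; module
      rw [key]
      exact Submodule.sub_mem _ (hrow _) (Submodule.smul_mem _ _ (hrow _))
    · rw [Asp, Submodule.span_le]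
      rintro x ⟨l, rfl⟩
      have e2 : scrollJet r a k s t0 u (Sum.inr ⟨⟨s + 1, fin2_add_one_ne s⟩, l⟩)
          = grow r a t0 (s + 1) (l : ℕ) := scroll_row_inr r a t0 k s u _
      show grow r a t0 (s + 1) (l : ℕ) ∈ _
      rw [← e2]
      exact hrow _
    · rw [Submodule.span_le, Set.singleton_subset_iff]
      have e1 := scroll_row_inl r a t0 k s u (Fin.last k)
      rw [Fin.val_last] at e1
      rw [← e1]
      exact hrow _

/-- Projection onto the `i`-th block. -/
noncomputable def proj (i : Fin 2) :
    ((Σ j : Fin 2, Fin (r j + 1)) → ℂ) →ₗ[ℂ] ((Σ j : Fin 2, Fin (r j + 1)) → ℂ) where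
  toFun f p := if p.1 = i then f p else 0
  map_add' f g := by funext p; simp only [Pi.add_apply]; split_ifs <;> simp
  map_smul' c f := by
    funext p; simp only [Pi.smul_apply, smul_eq_mul, RingHom.id_apply]; split_ifs <;> simp

lemma proj_grow_self (i : Fin 2) (m : ℕ) :
    proj r i (grow r a t0 i m) = grow r a t0 i m := by
  funext p
  show (if p.1 = i then grow r a t0 i m p else 0) = grow r a t0 i m p
  by_cases h : p.1 = i
  · rw [if_pos h]
  · rw [if_neg h]
    show 0 = blockIncl r i _ p
    simp [blockIncl, h]

lemma proj_grow_other {i j : Fin 2} (h : j ≠ i) (m : ℕ) :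
    proj r i (grow r a t0 j m) = 0 := by
  funext p
  show (if p.1 = i then grow r a t0 j m p else 0) = 0
  by_cases hp : p.1 = i
  · rw [if_pos hp]
    show blockIncl r j _ p = 0
    have : p.1 ≠ j := by rw [hp]; exact fun hh => h (hh.symm)
    simp [blockIncl, this]
  · rw [if_neg hp]


lemma proj_v (k : ℕ) (s : Fin 2) (c : ℂ) :
    proj r s (grow r a t0 s k + c • grow r a t0 (s + 1) k) = grow r a t0 s k := by
  rw [map_add, _root_.map_smul, proj_grow_self, proj_grow_other r a t0 (fin2_add_one_ne s),
    smul_zero, add_zero]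

lemma proj_v' (k : ℕ) (s : Fin 2) (c : ℂ) :
    proj r (s + 1) (grow r a t0 s k + c • grow r a t0 (s + 1) k)
      = c • grow r a t0 (s + 1) k := by
  rw [map_add, _root_.map_smul, proj_grow_self, proj_grow_other r a t0 (fin2_add_one_ne s).symm,
    zero_add]

lemma proj_mem_left {i j : Fin 2} (hij : j ≠ i) (k : ℕ) {x}
    (hx : x ∈ Asp r a t0 i k ⊔ Asp r a t0 j k) : proj r i x ∈ Asp r a t0 i k := by
  have hle : Asp r a t0 i k ⊔ Asp r a t0 j k
      ≤ Submodule.comap (proj r i) (Asp r a t0 i k) := by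
    refine sup_le ?_ ?_
    · rw [Asp, Submodule.span_le]
      rintro y ⟨l, rfl⟩
      show proj r i (grow r a t0 i (l : ℕ)) ∈ Asp r a t0 i k
      rw [proj_grow_self]
      exact Submodule.subset_span ⟨l, rfl⟩
    · rw [Asp, Submodule.span_le]
      rintro y ⟨l, rfl⟩
      show proj r i (grow r a t0 j (l : ℕ)) ∈ Asp r a t0 i k
      rw [proj_grow_other r a t0 hij]
      exact Submodule.zero_mem _
  exact hle hx

lemma proj_mem_right {i j : Fin 2} (hij : j ≠ i) (k : ℕ) {x}
    (hx : x ∈ Asp r a t0 j k ⊔ Asp r a t0 i k) : proj r i x ∈ Asp r a t0 i k := by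
  rw [sup_comm] at hx
  exact proj_mem_left r a t0 hij k hx

/-- The block inclusion as a linear map. -/
noncomputable def blockInclL (i : Fin 2) :
    (Fin (r i + 1) → ℂ) →ₗ[ℂ] ((Σ j : Fin 2, Fin (r j + 1)) → ℂ) where
  toFun := blockIncl r i
  map_add' v w := by
    funext p
    show (if h : p.1 = i then _ else 0) = _
    by_cases h : p.1 = i <;> simp [blockIncl, h]
  map_smul' c v := by
    funext p
    show (if h : p.1 = i then _ else 0) = _
    by_cases h : p.1 = i <;> simp [blockIncl, h]

lemma blockInclL_injective (i : Fin 2) : Function.Injective (blockInclL r i) := by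
  intro v w h
  funext j
  have := congrFun h ⟨i, j⟩
  simpa [blockInclL, blockIncl] using this

lemma rank_eq_rowSpace {m α : Type*} [Fintype m] [Fintype α] (M : Matrix m α ℂ) :
    M.rank = Module.finrank ℂ (rowSpace M) := by
  rw [Matrix.rank_eq_finrank_span_row]; rfl

lemma curve_rank_eq (i : Fin 2) (m : ℕ) :
    (curveJet (r i) (a i) m t0).rank
      = Module.finrank ℂ
          (Submodule.span ℂ (Set.range fun l : Fin (m + 1) => grow r a t0 i l)) := by
  rw [rank_eq_rowSpace]
  have h1 : (Set.range fun l : Fin (m + 1) => grow r a t0 i (l : ℕ))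
      = (blockInclL r i) '' (Set.range fun l : Fin (m + 1) => curveJet (r i) (a i) m t0 l) := by
    rw [← Set.range_comp]; rfl
  rw [h1, ← Submodule.map_span]
  exact (Submodule.equivMapOfInjective _ (blockInclL_injective r i) _).finrank_eq

lemma span_succ (i : Fin 2) (k : ℕ) :
    Submodule.span ℂ (Set.range fun l : Fin (k + 1) => grow r a t0 i l)
      = Asp r a t0 i k ⊔ Submodule.span ℂ {grow r a t0 i k} := by
  apply le_antisymm
  · rw [Submodule.span_le]
    rintro x ⟨l, rfl⟩
    show grow r a t0 i (l : ℕ) ∈ _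
    rcases lt_or_eq_of_le (Nat.lt_succ_iff.mp l.isLt) with hl | hl
    · exact Submodule.mem_sup_left (Submodule.subset_span ⟨⟨l, hl⟩, rfl⟩)
    · rw [hl]; exact Submodule.mem_sup_right (Submodule.subset_span rfl)
  · refine sup_le ?_ ?_
    · rw [Asp, Submodule.span_le]
      rintro x ⟨l, rfl⟩
      exact Submodule.subset_span ⟨l.castSucc, by simp⟩
    · rw [Submodule.span_le, Set.singleton_subset_iff]
      exact Submodule.subset_span ⟨Fin.last k, by simp⟩

lemma Asp_le (i : Fin 2) (k : ℕ) : Module.finrank ℂ (Asp r a t0 i k) ≤ k := by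
  have h := finrank_range_le_card (R := ℂ) (fun l : Fin k => grow r a t0 i (l : ℕ))
  rw [Fintype.card_fin] at h
  exact h

lemma D_eq (k : ℕ) (σ s : Fin 2) :
    Asp r a t0 σ k ⊔ Asp r a t0 (σ + 1) k = Asp r a t0 s k ⊔ Asp r a t0 (s + 1) k := by
  rcases fin2_cases σ s with h | h <;> subst h
  · rfl
  · rw [fin2_add_add, sup_comm]


instance {V : Type*} [AddCommGroup V] [Module ℂ V] (x : V) :
    FiniteDimensional ℂ (Submodule.span ℂ {x}) :=
  Module.Finite.span_of_finite ℂ (Set.finite_singleton _)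

lemma finrank_span_singleton_le {V : Type*} [AddCommGroup V] [Module ℂ V] (x : V) :
    Module.finrank ℂ (Submodule.span ℂ {x}) ≤ 1 := by
  by_cases h : x = 0
  · subst h
    have e : Submodule.span ℂ ({0} : Set V) = ⊥ := Submodule.span_zero_singleton ℂ
    rw [e, finrank_bot]
    omega
  · exact le_of_eq (finrank_span_singleton h)

lemma rank_le_of_lt (k : ℕ) (σ : Fin 2) (w : Fin 2 → ℂ)
    (hlt : Module.finrank ℂ ↥(Asp r a t0 σ k ⊔ Asp r a t0 (σ + 1) k) < 2 * k) :
    (scrollJet r a k σ t0 w).rank ≤ 2 * k := by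
  rw [rank_eq_rowSpace, rowSpace_scrollJet]
  refine le_trans (Submodule.finrank_add_le_finrank_add_finrank _ _) ?_
  have h2 := finrank_span_singleton_le
    (grow r a t0 σ k + w (σ + 1) • grow r a t0 (σ + 1) k)
  omega

lemma rank_le_of_mem (k : ℕ) (σ : Fin 2) (w : Fin 2 → ℂ)
    (h1 : grow r a t0 σ k ∈ Asp r a t0 σ k ⊔ Asp r a t0 (σ + 1) k)
    (h2 : grow r a t0 (σ + 1) k ∈ Asp r a t0 σ k ⊔ Asp r a t0 (σ + 1) k)
    (hle : Module.finrank ℂ ↥(Asp r a t0 σ k ⊔ Asp r a t0 (σ + 1) k) ≤ 2 * k) :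
    (scrollJet r a k σ t0 w).rank ≤ 2 * k := by
  rw [rank_eq_rowSpace, rowSpace_scrollJet]
  have hsp : Submodule.span ℂ {grow r a t0 σ k + w (σ + 1) • grow r a t0 (σ + 1) k}
      ≤ Asp r a t0 σ k ⊔ Asp r a t0 (σ + 1) k := by
    rw [Submodule.span_le, Set.singleton_subset_iff]
    exact Submodule.add_mem _ h1 (Submodule.smul_mem _ _ h2)
  rw [sup_eq_left.mpr hsp]
  exact hle

end Statement13Aux

open Statement13Aux in
/-- Theorem 2.7: let `n = 2` and suppose the fibre point `x` over
`t0` with chart coordinates `(s, u)` lies in `Φ_k(X)`. (i) If `x ≠ p_1, p_2`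
(i.e. `u_i ≠ 0` for `i ≠ s`), then the whole fibre lies in `Φ_k(X)`; (ii) if
`x = p_s` (i.e. `u_i = 0` for `i ≠ s`), then either the whole fibre lies in
`Φ_k(X)` or `p_s ∈ Φ_k(C_s)`. -/
theorem statement13 (r : Fin 2 → ℕ) (hr : ∀ i, 1 ≤ r i)
    (a : ∀ i : Fin 2, ℂ → Fin (r i + 1) → ℂ)
    (hent : ∀ i j, Differentiable ℂ fun t => a i t j)
    (hnd : ∀ i t, (curveJet (r i) (a i) 1 t).rank = 2)
    (t0 : ℂ) (k : ℕ) (hk : 2 ≤ k) (s : Fin 2) (u : Fin 2 → ℂ)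
    (hx : (scrollJet r a k s t0 u).rank ≤ 2 * k) :
    ((∀ i, i ≠ s → u i ≠ 0) →
      ∀ (σ : Fin 2) (w : Fin 2 → ℂ), (scrollJet r a k σ t0 w).rank ≤ 2 * k) ∧
    ((∀ i, i ≠ s → u i = 0) →
      ((∀ (σ : Fin 2) (w : Fin 2 → ℂ), (scrollJet r a k σ t0 w).rank ≤ 2 * k) ∨
        (curveJet (r s) (a s) k t0).rank ≤ k)) := by
  set D := Asp r a t0 s k ⊔ Asp r a t0 (s + 1) k with hDdef
  set v := grow r a t0 s k + u (s + 1) • grow r a t0 (s + 1) k with hvdef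
  have hxr : Module.finrank ℂ ↥(D ⊔ Submodule.span ℂ {v}) ≤ 2 * k := by
    rw [hDdef, hvdef, ← rowSpace_scrollJet, ← rank_eq_rowSpace]
    exact hx
  have hDle : Module.finrank ℂ ↥D ≤ 2 * k :=
    le_trans (Submodule.finrank_mono le_sup_left) hxr
  rcases lt_or_eq_of_le hDle with hlt | heq
  · refine ⟨fun _ σ w => ?_, fun _ => Or.inl fun σ w => ?_⟩ <;>
      exact rank_le_of_lt r a t0 k σ w (by rw [D_eq r a t0 k σ s]; exact hlt)
  · have hvD : v ∈ D := by
      by_contra hv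
      have hDlt : D < D ⊔ Submodule.span ℂ {v} := by
        refine lt_of_le_of_ne le_sup_left fun h => hv ?_
        rw [h]
        exact Submodule.mem_sup_right (Submodule.subset_span rfl)
      have := Submodule.finrank_lt_finrank_of_lt hDlt
      omega
    have h1' : grow r a t0 s k ∈ Asp r a t0 s k := by
      have hp := proj_mem_left r a t0 (fin2_add_one_ne s) k hvD
      rwa [hvdef, proj_v] at hp
    have hle : ∀ σ : Fin 2,
        Module.finrank ℂ ↥(Asp r a t0 σ k ⊔ Asp r a t0 (σ + 1) k) ≤ 2 * k := fun σ => by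
      rw [D_eq r a t0 k σ s]; exact heq.le
    constructor
    · intro hu
      have hu' : u (s + 1) ≠ 0 := hu (s + 1) (fin2_add_one_ne s)
      have h2'' : u (s + 1) • grow r a t0 (s + 1) k ∈ Asp r a t0 (s + 1) k := by
        have hp := proj_mem_right r a t0 (fin2_add_one_ne s).symm k hvD
        rwa [hvdef, proj_v'] at hp
      have h2' : grow r a t0 (s + 1) k ∈ Asp r a t0 (s + 1) k := by
        have := Submodule.smul_mem _ (u (s + 1))⁻¹ h2''
        rwa [smul_smul, inv_mul_cancel₀ hu', one_smul] at this
      have hall : ∀ τ : Fin 2, grow r a t0 τ k ∈ D := by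
        intro τ
        rcases fin2_cases τ s with rfl | rfl
        · exact Submodule.mem_sup_left h1'
        · exact Submodule.mem_sup_right h2'
      intro σ w
      refine rank_le_of_mem r a t0 k σ w ?_ ?_ (hle σ)
      · rw [D_eq r a t0 k σ s]; exact hall σ
      · rw [D_eq r a t0 k σ s]; exact hall (σ + 1)
    · intro _
      right
      rw [curve_rank_eq, span_succ,
        sup_eq_left.mpr (by
          rw [Submodule.span_le, Set.singleton_subset_iff]
          exact h1')]
      exact Asp_le r a t0 s k
end

section
/- (Corollary 2.9.) Let n = 2 and fix an integer k ≥ 2. Assume that for every t ∈ ℂ one has rank M^1_{k-1}(t) = k and rank M^1_k(t) ≤ k (i.e. Φ_{k−1}(C_1) = ∅ but Φ_k(C_1) = C_1). Then for every t ∈ ℂ, every s ∈ {1,2} and every u ∈ ℂ: rank M^{X,s}_k(t, u) ≤ 2k if and only if either (s, u) = (1, 0) (the point lies on C_1) or rank M^2_k(t) ≤ k (the fibre passes through a point of Φ_k(C_2)). In other words, Φ_k(X) consists of C_1 together with the fibres containing a point of Φ_k(C_2). -/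
open Matrix

open Submodule Module

-- linear map version
noncomputable def iotaL {n : ℕ} (r : Fin n → ℕ) (i : Fin n) :
    (Fin (r i + 1) → ℂ) →ₗ[ℂ] ((Σ j : Fin n, Fin (r j + 1)) → ℂ) where
  toFun := blockIncl r i
  map_add' v w := by funext p; simp only [blockIncl, Pi.add_apply]; split <;> simp
  map_smul' c v := by funext p; simp only [blockIncl, Pi.smul_apply, RingHom.id_apply]; split <;> simp

lemma iotaL_inj {n : ℕ} (r : Fin n → ℕ) (i : Fin n) : Function.Injective (iotaL r i) := by
  intro v w h
  funext j
  have := congrFun h ⟨i, j⟩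
  simpa [iotaL, blockIncl] using this

lemma iotaL_apply_ne {n : ℕ} (r : Fin n → ℕ) (i : Fin n) (v : Fin (r i + 1) → ℂ)
    (p : Σ j : Fin n, Fin (r j + 1)) (h : p.1 ≠ i) : iotaL r i v p = 0 := by
  simp [iotaL, blockIncl, h]


-- the l-th derivative row, independent of k
noncomputable def Drow (r : ℕ) (a : ℂ → Fin (r + 1) → ℂ) (t : ℂ) (l : ℕ) : Fin (r + 1) → ℂ :=
  fun j => iteratedDeriv l (fun s => a s j) t

lemma curveJet_row (r : ℕ) (a : ℂ → Fin (r + 1) → ℂ) (k : ℕ) (t : ℂ) (l : Fin (k + 1)) :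
    curveJet r a k t l = Drow r a t (l : ℕ) := rfl

lemma range_curveJet (r : ℕ) (a : ℂ → Fin (r + 1) → ℂ) (k : ℕ) (t : ℂ) :
    Set.range (curveJet r a k t) = Drow r a t '' Set.Iio (k + 1) := by
  ext v
  constructor
  · rintro ⟨l, rfl⟩; exact ⟨(l : ℕ), l.isLt, rfl⟩
  · rintro ⟨m, hm, rfl⟩; exact ⟨⟨m, hm⟩, rfl⟩

lemma rank_curveJet (r : ℕ) (a : ℂ → Fin (r + 1) → ℂ) (k : ℕ) (t : ℂ) :
    (curveJet r a k t).rank =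
      Module.finrank ℂ (Submodule.span ℂ (Drow r a t '' Set.Iio (k + 1))) := by
  rw [Matrix.rank_eq_finrank_span_row, Matrix.row_def, range_curveJet]


lemma disjoint_blocks (r : Fin 2 → ℕ) (P : Submodule ℂ (Fin (r 0 + 1) → ℂ))
    (Q : Submodule ℂ (Fin (r 1 + 1) → ℂ)) :
    P.map (iotaL r 0) ⊓ Q.map (iotaL r 1) = ⊥ := by
  rw [eq_bot_iff]
  rintro x ⟨⟨v, _, rfl⟩, ⟨w, _, hw⟩⟩
  have hv : v = 0 := by
    funext j
    have h1 : iotaL r 1 w ⟨0, j⟩ = 0 :=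
      iotaL_apply_ne r 1 w ⟨0, j⟩ (show (0 : Fin 2) ≠ 1 by decide)
    have h2 : iotaL r 0 v ⟨0, j⟩ = v j := by simp [iotaL, blockIncl]
    have h3 := congrFun hw ⟨0, j⟩
    show v j = 0
    rw [← h2, ← h3, h1]
  simp [hv]

lemma finrank_block_sup (r : Fin 2 → ℕ) (P : Submodule ℂ (Fin (r 0 + 1) → ℂ))
    (Q : Submodule ℂ (Fin (r 1 + 1) → ℂ)) :
    Module.finrank ℂ (P.map (iotaL r 0) ⊔ Q.map (iotaL r 1) : Submodule ℂ _) =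
      Module.finrank ℂ P + Module.finrank ℂ Q := by
  have h := Submodule.finrank_sup_add_finrank_inf_eq (P.map (iotaL r 0)) (Q.map (iotaL r 1))
  rw [disjoint_blocks, finrank_bot, add_zero] at h
  rw [h, (Submodule.equivMapOfInjective _ (iotaL_inj r 0) P).finrank_eq,
    (Submodule.equivMapOfInjective _ (iotaL_inj r 1) Q).finrank_eq]

section Rows
variable (r : Fin 2 → ℕ) (a : ∀ i : Fin 2, ℂ → Fin (r i + 1) → ℂ) (k : ℕ) (t : ℂ) (u : Fin 2 → ℂ)

lemma filter_ne_zero : (Finset.univ.filter (fun i : Fin 2 => i ≠ 0)) = {1} := by decide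
lemma filter_ne_one : (Finset.univ.filter (fun i : Fin 2 => i ≠ 1)) = {0} := by decide

lemma row_inl0 (l : Fin (k + 1)) :
    scrollJet r a k 0 t u (Sum.inl l) =
      iotaL r 0 (Drow (r 0) (a 0) t (l : ℕ)) + u 1 • iotaL r 1 (Drow (r 1) (a 1) t (l : ℕ)) := by
  show blockIncl r 0 _ + _ = _
  rw [filter_ne_zero, Finset.sum_singleton]
  rfl

lemma row_inl1 (l : Fin (k + 1)) :
    scrollJet r a k 1 t u (Sum.inl l) =
      iotaL r 1 (Drow (r 1) (a 1) t (l : ℕ)) + u 0 • iotaL r 0 (Drow (r 0) (a 0) t (l : ℕ)) := by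
  show blockIncl r 1 _ + _ = _
  rw [filter_ne_one, Finset.sum_singleton]
  rfl

lemma row_inr0 (m : Fin k) (hne : (1 : Fin 2) ≠ 0) :
    scrollJet r a k 0 t u (Sum.inr (⟨1, hne⟩, m)) = iotaL r 1 (Drow (r 1) (a 1) t (m : ℕ)) := rfl

lemma row_inr1 (m : Fin k) (hne : (0 : Fin 2) ≠ 1) :
    scrollJet r a k 1 t u (Sum.inr (⟨0, hne⟩, m)) = iotaL r 0 (Drow (r 0) (a 0) t (m : ℕ)) := rfl

end Rows

section Span
variable (r : Fin 2 → ℕ) (a : ∀ i : Fin 2, ℂ → Fin (r i + 1) → ℂ) (k : ℕ) (t : ℂ) (u : Fin 2 → ℂ)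

local notation "D0" => Drow (r 0) (a 0) t
local notation "D1" => Drow (r 1) (a 1) t

lemma span_scroll0 (hF : D0 k ∈ Submodule.span ℂ (D0 '' Set.Iio k)) :
    Submodule.span ℂ (Set.range (scrollJet r a k 0 t u)) =
      (Submodule.span ℂ (D0 '' Set.Iio k)).map (iotaL r 0) ⊔
        (Submodule.span ℂ (D1 '' Set.Iio k ∪ {u 1 • D1 k})).map (iotaL r 1) := by
  have hne : (1 : Fin 2) ≠ 0 := by decide
  set S := Submodule.span ℂ (Set.range (scrollJet r a k 0 t u)) with hS
  set P := (Submodule.span ℂ (D0 '' Set.Iio k)).map (iotaL r 0) with hP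
  set Q := (Submodule.span ℂ (D1 '' Set.Iio k ∪ {u 1 • D1 k})).map (iotaL r 1) with hQ
  apply le_antisymm
  · rw [Submodule.span_le]
    rintro x ⟨row, rfl⟩
    rcases row with l | ⟨⟨i, hi⟩, m⟩
    · rw [row_inl0]
      have hmem0 : iotaL r 0 (D0 (l : ℕ)) ∈ P := by
        apply Submodule.mem_map_of_mem
        rcases lt_or_eq_of_le (Nat.lt_succ_iff.mp l.isLt) with h | h
        · exact Submodule.subset_span ⟨(l : ℕ), h, rfl⟩
        · rw [h]; exact hF
      have hmem1 : u 1 • iotaL r 1 (D1 (l : ℕ)) ∈ Q := by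
        rw [← LinearMap.map_smul]
        apply Submodule.mem_map_of_mem
        rcases lt_or_eq_of_le (Nat.lt_succ_iff.mp l.isLt) with h | h
        · exact Submodule.smul_mem _ _ (Submodule.subset_span (Or.inl ⟨(l : ℕ), h, rfl⟩))
        · rw [h]; exact Submodule.subset_span (Or.inr rfl)
      exact Submodule.add_mem _ (Submodule.mem_sup_left hmem0) (Submodule.mem_sup_right hmem1)
    · have h1 : i = 1 := by
        have : i.val ≠ 0 := fun h => hi (Fin.ext h)
        have h2 : i.val < 2 := i.isLt
        exact Fin.ext (by omega)
      subst h1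
      rw [row_inr0]
      exact Submodule.mem_sup_right
        (Submodule.mem_map_of_mem (Submodule.subset_span (Or.inl ⟨(m : ℕ), m.isLt, rfl⟩)))
  · have claim0 : ∀ m : ℕ, m < k → iotaL r 0 (D0 m) ∈ S := by
      intro m hm
      have e1 : scrollJet r a k 0 t u (Sum.inl ⟨m, by omega⟩) ∈ S :=
        Submodule.subset_span ⟨_, rfl⟩
      have e2 : scrollJet r a k 0 t u (Sum.inr (⟨1, hne⟩, ⟨m, hm⟩)) ∈ S :=
        Submodule.subset_span ⟨_, rfl⟩
      have := Submodule.sub_mem _ e1 (Submodule.smul_mem _ (u 1) e2)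
      rwa [row_inl0, row_inr0, add_sub_cancel_right] at this
    have hP_le : P ≤ S := by
      rw [hP, Submodule.map_span, Submodule.span_le]
      rintro _ ⟨_, ⟨m, hm, rfl⟩, rfl⟩
      exact claim0 m hm
    have hFk : iotaL r 0 (D0 k) ∈ S := hP_le (Submodule.mem_map_of_mem hF)
    have hQ_le : Q ≤ S := by
      rw [hQ, Submodule.map_span, Submodule.span_le]
      rintro _ ⟨x, hx, rfl⟩
      rcases hx with ⟨m, hm, rfl⟩ | hx
      · exact Submodule.subset_span ⟨Sum.inr (⟨1, hne⟩, ⟨m, hm⟩), (row_inr0 r a k t u ⟨m, hm⟩ hne).symm⟩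
      · rw [Set.mem_singleton_iff] at hx
        subst hx
        have e1 : scrollJet r a k 0 t u (Sum.inl ⟨k, by omega⟩) ∈ S :=
          Submodule.subset_span ⟨_, rfl⟩
        rw [row_inl0] at e1
        have := Submodule.sub_mem _ e1 hFk
        rw [add_sub_cancel_left] at this
        rw [LinearMap.map_smul]
        exact this
    exact sup_le hP_le hQ_le

lemma span_scroll1 (hF : D0 k ∈ Submodule.span ℂ (D0 '' Set.Iio k)) :
    Submodule.span ℂ (Set.range (scrollJet r a k 1 t u)) =
      (Submodule.span ℂ (D0 '' Set.Iio k)).map (iotaL r 0) ⊔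
        (Submodule.span ℂ (D1 '' Set.Iio (k + 1))).map (iotaL r 1) := by
  have hne : (0 : Fin 2) ≠ 1 := by decide
  set S := Submodule.span ℂ (Set.range (scrollJet r a k 1 t u)) with hS
  set P := (Submodule.span ℂ (D0 '' Set.Iio k)).map (iotaL r 0) with hP
  set Q := (Submodule.span ℂ (D1 '' Set.Iio (k + 1))).map (iotaL r 1) with hQ
  apply le_antisymm
  · rw [Submodule.span_le]
    rintro x ⟨row, rfl⟩
    rcases row with l | ⟨⟨i, hi⟩, m⟩
    · rw [row_inl1]
      have hmem1 : iotaL r 1 (D1 (l : ℕ)) ∈ Q :=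
        Submodule.mem_map_of_mem (Submodule.subset_span ⟨(l : ℕ), l.isLt, rfl⟩)
      have hmem0 : u 0 • iotaL r 0 (D0 (l : ℕ)) ∈ P := by
        rw [← LinearMap.map_smul]
        apply Submodule.mem_map_of_mem
        apply Submodule.smul_mem
        rcases lt_or_eq_of_le (Nat.lt_succ_iff.mp l.isLt) with h | h
        · exact Submodule.subset_span ⟨(l : ℕ), h, rfl⟩
        · rw [h]; exact hF
      exact Submodule.add_mem _ (Submodule.mem_sup_right hmem1) (Submodule.mem_sup_left hmem0)
    · have h0 : i = 0 := by
        have hv : i.val ≠ 1 := fun h => hi (Fin.ext h)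
        have h2 : i.val < 2 := i.isLt
        exact Fin.ext (by omega)
      subst h0
      rw [row_inr1]
      exact Submodule.mem_sup_left
        (Submodule.mem_map_of_mem (Submodule.subset_span ⟨(m : ℕ), m.isLt, rfl⟩))
  · have claim0 : ∀ m : ℕ, m < k → iotaL r 0 (D0 m) ∈ S := by
      intro m hm
      exact Submodule.subset_span ⟨Sum.inr (⟨0, hne⟩, ⟨m, hm⟩), (row_inr1 r a k t u ⟨m, hm⟩ hne).symm⟩
    have hP_le : P ≤ S := by
      rw [hP, Submodule.map_span, Submodule.span_le]
      rintro _ ⟨_, ⟨m, hm, rfl⟩, rfl⟩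
      exact claim0 m hm
    have hFk : iotaL r 0 (D0 k) ∈ S := hP_le (Submodule.mem_map_of_mem hF)
    have hQ_le : Q ≤ S := by
      rw [hQ, Submodule.map_span, Submodule.span_le]
      rintro _ ⟨_, ⟨m, hm, rfl⟩, rfl⟩
      have e1 : scrollJet r a k 1 t u (Sum.inl ⟨m, hm⟩) ∈ S :=
        Submodule.subset_span ⟨_, rfl⟩
      rw [row_inl1] at e1
      have h0 : iotaL r 0 (D0 m) ∈ S := by
        rcases lt_or_eq_of_le (Nat.lt_succ_iff.mp hm) with h | h
        · exact claim0 m h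
        · rw [h]; exact hFk
      have := Submodule.sub_mem _ e1 (Submodule.smul_mem _ (u 0) h0)
      rwa [add_sub_cancel_right] at this
    exact sup_le hP_le hQ_le

end Span


/-- Corollary 2.9: let `n = 2` and suppose `Φ_{k-1}(C_1) = ∅` but
`Φ_k(C_1) = C_1`.  Then a point of `X` lies in `Φ_k(X)` iff either it lies on `C_1`
(chart `s = 0` with `u = 0`) or its fibre passes through a point of `Φ_k(C_2)`. -/
theorem statement15 (r : Fin 2 → ℕ) (hr : ∀ i, 1 ≤ r i)
    (a : ∀ i : Fin 2, ℂ → Fin (r i + 1) → ℂ)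
    (hent : ∀ i j, Differentiable ℂ fun t => a i t j)
    (hnd : ∀ i t, (curveJet (r i) (a i) 1 t).rank = 2)
    (k : ℕ) (hk : 2 ≤ k)
    (h1 : ∀ t : ℂ, (curveJet (r 0) (a 0) (k - 1) t).rank = k)
    (h2 : ∀ t : ℂ, (curveJet (r 0) (a 0) k t).rank ≤ k) :
    ∀ (t : ℂ) (s : Fin 2) (u : Fin 2 → ℂ),
      (scrollJet r a k s t u).rank ≤ 2 * k ↔
        ((s = 0 ∧ ∀ i, i ≠ s → u i = 0) ∨
          (curveJet (r 1) (a 1) k t).rank ≤ k) := by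
  intro t s u
  have hk1 : k - 1 + 1 = k := by omega
  -- finrank of the span of the first k rows of curve 0
  have hrk0 : Module.finrank ℂ
      (Submodule.span ℂ (Drow (r 0) (a 0) t '' Set.Iio k)) = k := by
    have := (rank_curveJet (r 0) (a 0) (k - 1) t).symm.trans (h1 t)
    rwa [hk1] at this
  -- span of first k rows equals span of first k+1 rows
  have hFull : Submodule.span ℂ (Drow (r 0) (a 0) t '' Set.Iio k) =
      Submodule.span ℂ (Drow (r 0) (a 0) t '' Set.Iio (k + 1)) := by
    apply Submodule.eq_of_le_of_finrank_le
    · exact Submodule.span_mono (Set.image_mono fun x hx => lt_trans hx (Nat.lt_succ_self k))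
    · rw [hrk0, ← rank_curveJet]
      exact h2 t
  have hF : Drow (r 0) (a 0) t k ∈ Submodule.span ℂ (Drow (r 0) (a 0) t '' Set.Iio k) := by
    rw [hFull]
    exact Submodule.subset_span ⟨k, Nat.lt_succ_self k, rfl⟩
  have hs : s = 0 ∨ s = 1 := by
    rcases s with ⟨v, hv⟩
    interval_cases v
    · exact Or.inl rfl
    · exact Or.inr rfl
  rcases hs with rfl | rfl
  · -- chart s = 0
    rw [Matrix.rank_eq_finrank_span_row, Matrix.row_def, span_scroll0 r a k t u hF, finrank_block_sup, hrk0]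
    by_cases hu : u 1 = 0
    · -- on C_1 : always in the inflectional locus
      apply iff_of_true
      · have hBle : Module.finrank ℂ
            (Submodule.span ℂ (Drow (r 1) (a 1) t '' Set.Iio k ∪ {u 1 • Drow (r 1) (a 1) t k})) ≤ k := by
          rw [hu, zero_smul]
          have hsp : Submodule.span ℂ
              (Drow (r 1) (a 1) t '' Set.Iio k ∪ {(0 : Fin (r 1 + 1) → ℂ)}) =
              Submodule.span ℂ (Drow (r 1) (a 1) t '' Set.Iio k) := by
            rw [Submodule.span_union, Submodule.span_zero_singleton, sup_bot_eq]
          rw [hsp]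
          have := (rank_curveJet (r 1) (a 1) (k - 1) t)
          rw [show Set.Iio (k - 1 + 1) = Set.Iio k from by rw [hk1]] at this
          rw [← this]
          calc (curveJet (r 1) (a 1) (k - 1) t).rank ≤ Fintype.card (Fin (k - 1 + 1)) :=
                Matrix.rank_le_card_height _
            _ = k := by rw [Fintype.card_fin, hk1]
        calc k + Module.finrank ℂ
              (Submodule.span ℂ (Drow (r 1) (a 1) t '' Set.Iio k ∪ {u 1 • Drow (r 1) (a 1) t k})) ≤
            k + k := Nat.add_le_add_left hBle k
          _ = 2 * k := (two_mul k).symm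
      · exact Or.inl ⟨rfl, fun i hi => by
          have h1' : i = 1 := by
            have hv : i.val ≠ 0 := fun h => hi (Fin.ext h)
            have h2' : i.val < 2 := i.isLt
            exact Fin.ext (by omega)
          rw [h1']; exact hu⟩
    · -- off C_1 : condition is the flexiness of C_2
      have hsp : Submodule.span ℂ
          (Drow (r 1) (a 1) t '' Set.Iio k ∪ {u 1 • Drow (r 1) (a 1) t k}) =
          Submodule.span ℂ (Drow (r 1) (a 1) t '' Set.Iio (k + 1)) := by
        apply le_antisymm
        · rw [Submodule.span_le]
          rintro x (⟨m, hm, rfl⟩ | hx)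
          · exact Submodule.subset_span ⟨m, lt_trans hm (Nat.lt_succ_self k), rfl⟩
          · rw [Set.mem_singleton_iff] at hx
            subst hx
            exact Submodule.smul_mem _ _
              (Submodule.subset_span ⟨k, Nat.lt_succ_self k, rfl⟩)
        · rw [Submodule.span_le]
          rintro _ ⟨m, hm, rfl⟩
          rcases lt_or_eq_of_le (Nat.lt_succ_iff.mp hm) with h | h
          · exact Submodule.subset_span (Or.inl ⟨m, h, rfl⟩)
          · subst h
            have hmem : u 1 • Drow (r 1) (a 1) t m ∈
                Submodule.span ℂ (Drow (r 1) (a 1) t '' Set.Iio m ∪ {u 1 • Drow (r 1) (a 1) t m}) :=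
              Submodule.subset_span (Or.inr rfl)
            have h2 := Submodule.smul_mem _ (u 1)⁻¹ hmem
            rwa [inv_smul_smul₀ hu] at h2
      rw [hsp, ← rank_curveJet]
      constructor
      · intro h
        exact Or.inr (by omega)
      · rintro (⟨-, h⟩ | h)
        · exact absurd (h 1 (by decide)) hu
        · omega
  · -- chart s = 1
    rw [Matrix.rank_eq_finrank_span_row, Matrix.row_def, span_scroll1 r a k t u hF, finrank_block_sup, hrk0,
      ← rank_curveJet]
    constructor
    · intro h
      exact Or.inr (by omega)
    · rintro (⟨h, -⟩ | h)
      · exact absurd h (by decide)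
      · omega
end

section
/- (Example 3.2: a non-normal rational scroll whose higher osculating spaces all have dimension 3 along a fibre.) Fix integers k ≥ 2 and r ≥ 3. Let n = 2, r_1 = 1, r_2 = r, and take a^1(t) = (1, t) and a^2(t) = (1, t, t^{k+1}, t^{k+2}, …, t^{k+r-1}). Then: (1) for every integer h with 2 ≤ h ≤ k, rank M^2_h(0) = 2 (the point of C_2 at t = 0 lies in Φ_h(C_2) with osculating space of every order h ≤ k equal to the tangent line); and (2) for every h with 2 ≤ h ≤ k, every s ∈ {1,2} and every u ∈ ℂ, rank M^{X,s}_h(0, u) = 4, i.e. every point of the fibre of the scroll over t = 0 has h-th osculating space of projective dimension exactly 3 for all 2 ≤ h ≤ k. -/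
open Matrix

lemma itd_pow (m : ℕ) : ∀ (l : ℕ), iteratedDeriv l (fun s : ℂ => s ^ m) =
    fun s => (m.descFactorial l : ℂ) * s ^ (m - l) := by
  intro l
  induction l with
  | zero => simp
  | succ n ih =>
      rw [iteratedDeriv_succ, ih]
      funext s
      rw [deriv_const_mul _ (differentiable_pow _).differentiableAt, deriv_pow_field,
        Nat.descFactorial_succ, ← Nat.sub_sub]
      push_cast
      ring

lemma itd_pow_zero (l m : ℕ) : iteratedDeriv l (fun s : ℂ => s ^ m) 0 =
    if l = m then (m.factorial : ℂ) else 0 := by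
  rw [itd_pow]
  dsimp only
  rcases lt_trichotomy l m with hlt | rfl | hgt
  · rw [if_neg hlt.ne, zero_pow (by omega : m - l ≠ 0), mul_zero]
  · rw [if_pos rfl, Nat.sub_self, pow_zero, mul_one, Nat.descFactorial_self]
  · rw [if_neg hgt.ne', Nat.descFactorial_eq_zero_iff_lt.mpr hgt]
    simp

lemma span_range_eq {ι α : Type*} [Fintype α] [DecidableEq α] {d : ℕ}
    (rows : ι → (α → ℂ)) (f : Fin d → α) (hf : Function.Injective f)
    (hsub : ∀ i, rows i ∈ Submodule.span ℂ (Set.range fun m => (Pi.single (f m) 1 : α → ℂ)))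
    (hsup : ∀ m, (Pi.single (f m) 1 : α → ℂ) ∈ Submodule.span ℂ (Set.range rows)) :
    Module.finrank ℂ (Submodule.span ℂ (Set.range rows)) = d := by
  have hspan : Submodule.span ℂ (Set.range rows)
      = Submodule.span ℂ (Set.range fun m => (Pi.single (f m) 1 : α → ℂ)) := by
    apply le_antisymm
    · rw [Submodule.span_le]; rintro x ⟨i, rfl⟩; exact hsub i
    · rw [Submodule.span_le]; rintro x ⟨m, rfl⟩; exact hsup m
  have hli : LinearIndependent ℂ (fun m : Fin d => (Pi.single (f m) 1 : α → ℂ)) := by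
    have := (Pi.basisFun ℂ α).linearIndependent.comp f hf
    simpa [Function.comp_def, Pi.basisFun_apply] using this
  rw [hspan, finrank_span_eq_card hli, Fintype.card_fin]

open Matrix


lemma blockIncl_single {n : ℕ} (r : Fin n → ℕ) (i : Fin n) (j : Fin (r i + 1)) :
    blockIncl r i (Pi.single j 1) = Pi.single (⟨i, j⟩ : Σ j : Fin n, Fin (r j + 1)) (1 : ℂ) := by
  funext p
  rcases p with ⟨p1, p2⟩
  by_cases hp : p1 = i
  · subst hp
    simp [blockIncl, Pi.single_apply, Sigma.ext_iff, Fin.ext_iff]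
  · simp [blockIncl, hp, Pi.single_apply, Sigma.ext_iff, Ne.symm hp]

lemma blockIncl_zero {n : ℕ} (r : Fin n → ℕ) (i : Fin n) :
    blockIncl r i (0 : Fin (r i + 1) → ℂ) = 0 := by
  funext p; simp [blockIncl]


/-- Example 3.2: a non-normal rational scroll whose higher
osculating spaces all have projective dimension 3 along the fibre over `t = 0`:
take `C_1` a line (`a^1(t) = (1, t)`) and `C_2` the projection of a rational
normal curve given by `a^2(t) = (1, t, t^{k+1}, …, t^{k+r-1})`.  Then for every
`2 ≤ h ≤ k`: (1) the `t = 0` point of `C_2` lies in `Φ_h(C_2)` with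
`rank M^2_h(0) = 2`; and (2) every point of the fibre over `t = 0` has `h`-th jet
matrix of rank exactly `4`. -/
theorem statement17 (k rr : ℕ) (hk : 2 ≤ k) (hrr : 3 ≤ rr)
    (r : Fin 2 → ℕ) (hr0 : r 0 = 1) (hr1 : r 1 = rr)
    (a : ∀ i : Fin 2, ℂ → Fin (r i + 1) → ℂ)
    (ha0 : ∀ (t : ℂ) (j : Fin (r 0 + 1)), a 0 t j = t ^ (j : ℕ))
    (ha1 : ∀ (t : ℂ) (j : Fin (r 1 + 1)),
      a 1 t j = if (j : ℕ) ≤ 1 then t ^ (j : ℕ) else t ^ (k + (j : ℕ) - 1)) :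
    (∀ h, 2 ≤ h → h ≤ k → (curveJet (r 1) (a 1) h 0).rank = 2) ∧
    (∀ h, 2 ≤ h → h ≤ k → ∀ (s : Fin 2) (u : Fin 2 → ℂ),
      (scrollJet r a h s 0 u).rank = 4) := by
  have hcases : ∀ i : Fin 2, i = 0 ∨ i = 1 := by decide
  have hr : ∀ i : Fin 2, 1 ≤ r i := by
    intro i; rcases hcases i with rfl | rfl
    · omega
    · omega
  have hae : ∀ (i : Fin 2) (t : ℂ) (j : Fin (r i + 1)),
      a i t j = t ^ (if (j : ℕ) ≤ 1 then (j : ℕ) else k + (j : ℕ) - 1) := by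
    intro i
    rcases hcases i with rfl | rfl
    · intro t j
      rw [ha0 t j]
      have h1 : (j : ℕ) ≤ 1 := by have := j.isLt; omega
      simp [h1]
    · intro t j
      rw [ha1 t j]
      split_ifs <;> rfl
  have hrow : ∀ (i : Fin 2) (h : ℕ), h ≤ k → ∀ l : Fin (h + 1),
      curveJet (r i) (a i) h 0 l =
        if (l : ℕ) = 0 then Pi.single (⟨0, Nat.succ_pos _⟩ : Fin (r i + 1)) 1
        else if (l : ℕ) = 1 then Pi.single (⟨1, by have := hr i; omega⟩ : Fin (r i + 1)) 1
        else 0 := by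
    intro i h hh l
    funext j
    have hl : (l : ℕ) ≤ h := Nat.lt_succ_iff.mp l.isLt
    have : curveJet (r i) (a i) h 0 l j
        = iteratedDeriv (l : ℕ) (fun s => a i s j) 0 := rfl
    rw [this, show (fun s : ℂ => a i s j)
        = fun s => s ^ (if (j : ℕ) ≤ 1 then (j : ℕ) else k + (j : ℕ) - 1)
      from funext fun s => hae i s j, itd_pow_zero]
    simp only [apply_ite (fun v : Fin (r i + 1) → ℂ => v j), Pi.single_apply,
      Fin.ext_iff, Pi.zero_apply]
    by_cases hj : (j : ℕ) ≤ 1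
    · rw [if_pos hj]
      by_cases hj0 : (j : ℕ) = 0
      · simp only [hj0, Nat.factorial_zero, Nat.cast_one]
        split_ifs <;> first | rfl | omega | contradiction
      · have hj1 : (j : ℕ) = 1 := by omega
        simp only [hj1, Nat.factorial_one, Nat.cast_one]
        split_ifs <;> first | rfl | omega | contradiction
    · rw [if_neg hj, if_neg (by omega : ¬ (l : ℕ) = k + (j : ℕ) - 1)]
      simp only [show ¬ (j : ℕ) = 0 by omega, show ¬ (j : ℕ) = 1 by omega, if_false]
      split_ifs <;> rfl
  -- PART 1
  have part1 : ∀ h, 2 ≤ h → h ≤ k → (curveJet (r 1) (a 1) h 0).rank = 2 := by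
    intro h hh2 hhk
    rw [Matrix.rank_eq_finrank_span_row]
    have h1r : (1 : ℕ) < r 1 + 1 := by have := hr 1; omega
    apply span_range_eq _ (![⟨0, Nat.succ_pos _⟩, ⟨1, h1r⟩] : Fin 2 → Fin (r 1 + 1))
    · intro x y hxy
      fin_cases x <;> fin_cases y <;>
        first | rfl | (exact absurd (congrArg Fin.val hxy) (by simp))
    · intro l
      rw [show (curveJet (r 1) (a 1) h 0).row l
          = curveJet (r 1) (a 1) h 0 l from rfl, hrow 1 h hhk l]
      split_ifs with h0 h1
      · exact Submodule.subset_span ⟨0, by simp⟩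
      · exact Submodule.subset_span ⟨1, by simp⟩
      · exact zero_mem _
    · intro m
      fin_cases m
      · have h0 := hrow 1 h hhk ⟨0, by omega⟩
        rw [if_pos rfl] at h0
        simp only [Matrix.cons_val_zero]
        exact h0 ▸ Submodule.subset_span (Set.mem_range_self _)
      · have h1 := hrow 1 h hhk ⟨1, by omega⟩
        rw [if_neg (by norm_num), if_pos rfl] at h1
        simp only [Matrix.cons_val_one, Matrix.head_cons]
        exact h1 ▸ Submodule.subset_span (Set.mem_range_self _)
  -- PART 2
  have part2 : ∀ h, 2 ≤ h → h ≤ k → ∀ (s : Fin 2) (u : Fin 2 → ℂ),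
      (scrollJet r a h s 0 u).rank = 4 := by
    intro h hh2 hhk s u
    rw [Matrix.rank_eq_finrank_span_row]
    have hss : s + 1 ≠ s := by revert s; decide
    have hone : ∀ i : Fin 2, i ≠ s → i = s + 1 := by revert s; decide
    have hfil : (Finset.univ.filter (fun i : Fin 2 => i ≠ s)) = {s + 1} := by
      revert s; decide
    have hinl : ∀ l : Fin (h + 1), scrollJet r a h s 0 u (Sum.inl l) =
        blockIncl r s (curveJet (r s) (a s) h 0 l) +
          u (s + 1) • blockIncl r (s + 1) (curveJet (r (s + 1)) (a (s + 1)) h 0 l) := by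
      intro l
      show blockIncl r s (curveJet (r s) (a s) h 0 l) +
          ∑ i ∈ Finset.univ.filter (fun i => i ≠ s),
            u i • blockIncl r i (curveJet (r i) (a i) h 0 l) = _
      rw [hfil, Finset.sum_singleton]
    have hinr : ∀ (q : {i : Fin 2 // i ≠ s} × Fin h), scrollJet r a h s 0 u (Sum.inr q) =
        blockIncl r q.1.1 (curveJet (r q.1.1) (a q.1.1) h 0 q.2.castSucc) := fun _ => rfl
    have h1s : (1 : ℕ) < r s + 1 := by have := hr s; omega
    have h1s' : (1 : ℕ) < r (s + 1) + 1 := by have := hr (s + 1); omega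
    apply span_range_eq _
      (![⟨s, ⟨0, Nat.succ_pos _⟩⟩, ⟨s, ⟨1, h1s⟩⟩, ⟨s + 1, ⟨0, Nat.succ_pos _⟩⟩,
          ⟨s + 1, ⟨1, h1s'⟩⟩] : Fin 4 → Σ j : Fin 2, Fin (r j + 1))
    · intro x y hxy
      have e1 := congrArg Sigma.fst hxy
      have e2 := congrArg (fun p : (Σ j : Fin 2, Fin (r j + 1)) => (p.2 : ℕ)) hxy
      fin_cases x <;> fin_cases y <;>
        first
          | rfl
          | (exact absurd (show s = s + 1 from e1) (Ne.symm hss))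
          | (exact absurd (show s + 1 = s from e1) hss)
          | (exact absurd (show (0 : ℕ) = 1 from e2) (by norm_num))
          | (exact absurd (show (1 : ℕ) = 0 from e2) (by norm_num))
    · rintro (l | q)
      · rw [show (scrollJet r a h s 0 u).row (Sum.inl l)
            = scrollJet r a h s 0 u (Sum.inl l) from rfl, hinl l,
          hrow s h hhk l, hrow (s + 1) h hhk l]
        split_ifs with h0 h1
        · rw [blockIncl_single, blockIncl_single]
          exact add_mem (Submodule.subset_span ⟨0, by simp⟩)
            (Submodule.smul_mem _ _ (Submodule.subset_span ⟨2, by simp⟩))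
        · rw [blockIncl_single, blockIncl_single]
          exact add_mem (Submodule.subset_span ⟨1, by simp⟩)
            (Submodule.smul_mem _ _ (Submodule.subset_span ⟨3, by simp⟩))
        · rw [blockIncl_zero, blockIncl_zero]
          simp only [smul_zero, add_zero, zero_add]
          exact Submodule.zero_mem _
      · obtain ⟨⟨i, hi⟩, m⟩ := q
        have hieq : i = s + 1 := hone i hi
        subst hieq
        rw [show (scrollJet r a h s 0 u).row (Sum.inr (⟨s + 1, hi⟩, m))
            = scrollJet r a h s 0 u (Sum.inr (⟨s + 1, hi⟩, m)) from rfl,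
          hinr (⟨s + 1, hi⟩, m), hrow (s + 1) h hhk m.castSucc]
        simp only [Fin.coe_castSucc]
        split_ifs with h0 h1
        · rw [blockIncl_single]
          exact Submodule.subset_span ⟨2, by simp⟩
        · rw [blockIncl_single]
          exact Submodule.subset_span ⟨3, by simp⟩
        · rw [blockIncl_zero]
          exact zero_mem _
    · -- the four basis vectors are in the row span
      have m2 : (Pi.single (⟨s + 1, ⟨0, Nat.succ_pos _⟩⟩ : Σ j : Fin 2, Fin (r j + 1)) (1 : ℂ))
          ∈ Submodule.span ℂ (Set.range (scrollJet r a h s 0 u : _ → (_ → ℂ))) := by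
        have e := hinr (⟨s + 1, hss⟩, ⟨0, by omega⟩)
        rw [hrow (s + 1) h hhk _, if_pos (by simp), blockIncl_single] at e
        exact e ▸ Submodule.subset_span (Set.mem_range_self _)
      have m3 : (Pi.single (⟨s + 1, ⟨1, h1s'⟩⟩ : Σ j : Fin 2, Fin (r j + 1)) (1 : ℂ))
          ∈ Submodule.span ℂ (Set.range (scrollJet r a h s 0 u : _ → (_ → ℂ))) := by
        have e := hinr (⟨s + 1, hss⟩, ⟨1, by omega⟩)
        rw [hrow (s + 1) h hhk _, if_neg (by simp), if_pos (by simp), blockIncl_single] at e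
        exact e ▸ Submodule.subset_span (Set.mem_range_self _)
      have m0 : (Pi.single (⟨s, ⟨0, Nat.succ_pos _⟩⟩ : Σ j : Fin 2, Fin (r j + 1)) (1 : ℂ))
          ∈ Submodule.span ℂ (Set.range (scrollJet r a h s 0 u : _ → (_ → ℂ))) := by
        have e := hinl ⟨0, by omega⟩
        rw [hrow s h hhk _, hrow (s + 1) h hhk _, if_pos (by simp), if_pos (by simp),
          blockIncl_single, blockIncl_single] at e
        have e' : (Pi.single (⟨s, ⟨0, Nat.succ_pos _⟩⟩ : Σ j : Fin 2, Fin (r j + 1)) (1 : ℂ))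
            = scrollJet r a h s 0 u (Sum.inl ⟨0, by omega⟩)
              - u (s + 1) • (Pi.single (⟨s + 1, ⟨0, Nat.succ_pos _⟩⟩ :
                  Σ j : Fin 2, Fin (r j + 1)) (1 : ℂ) : (Σ j : Fin 2, Fin (r j + 1)) → ℂ) := by
          rw [e, add_sub_cancel_right]
        rw [e']
        exact sub_mem (Submodule.subset_span (Set.mem_range_self _))
          (Submodule.smul_mem _ _ m2)
      have m1 : (Pi.single (⟨s, ⟨1, h1s⟩⟩ : Σ j : Fin 2, Fin (r j + 1)) (1 : ℂ))
          ∈ Submodule.span ℂ (Set.range (scrollJet r a h s 0 u : _ → (_ → ℂ))) := by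
        have e := hinl ⟨1, by omega⟩
        rw [hrow s h hhk _, hrow (s + 1) h hhk _, if_neg (by simp), if_pos (by simp),
          if_neg (by simp), if_pos (by simp), blockIncl_single, blockIncl_single] at e
        have e' : (Pi.single (⟨s, ⟨1, h1s⟩⟩ : Σ j : Fin 2, Fin (r j + 1)) (1 : ℂ))
            = scrollJet r a h s 0 u (Sum.inl ⟨1, by omega⟩)
              - u (s + 1) • (Pi.single (⟨s + 1, ⟨1, h1s'⟩⟩ :
                  Σ j : Fin 2, Fin (r j + 1)) (1 : ℂ) : (Σ j : Fin 2, Fin (r j + 1)) → ℂ) := by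
          rw [e, add_sub_cancel_right]
        rw [e']
        exact sub_mem (Submodule.subset_span (Set.mem_range_self _))
          (Submodule.smul_mem _ _ m3)
      intro m
      fin_cases m
      · exact m0
      · exact m1
      · exact m2
      · exact m3
  exact ⟨part1, part2⟩
end
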